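/- arXiv:1012.0079 — 5 statements merged into one kernel-verified Lean document; each statement's English description precedes it below -/
import Mathlib

section
/- Let Y be a Hilbert space, J an anti-self-adjoint operator on Y with bounded inverse ‖J^{-1}‖ ≤ C₀, and let g : [t₀, t₀+T] → Y be continuously differentiable with ‖g(t)‖ ≤ M₀ and ‖g'(t)‖ ≤ M₁ for all t. Then for all t ∈ [t₀, t₀+T] and all ε > 0, ‖∫_{t₀}^{t} e^{((t-τ)/ε)J} g(τ) dτ‖ ≤ ε C₀ (2 M₀ + T M₁). -/
open Filter Topology

lemma Ujoint {Y : Type*} [NormedAddCommGroup Y] [NormedSpace ℝ Y]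
    (U : ℝ → Y →L[ℝ] Y)
    (hUiso : ∀ (s : ℝ) (y : Y), ‖U s y‖ = ‖y‖)
    (hUcont : ∀ y : Y, Continuous fun s : ℝ => U s y) :
    Continuous fun p : ℝ × Y => U p.1 p.2 := by
  rw [continuous_iff_continuousAt]
  rintro ⟨s₀, y₀⟩
  have h1 : Tendsto (fun p : ℝ × Y => U p.1 (p.2 - y₀)) (𝓝 (s₀, y₀)) (𝓝 0) := by
    have hb : Tendsto (fun p : ℝ × Y => ‖p.2 - y₀‖) (𝓝 (s₀, y₀)) (𝓝 0) := by
      have h : Tendsto (fun p : ℝ × Y => p.2 - y₀) (𝓝 (s₀, y₀)) (𝓝 (y₀ - y₀)) :=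
        (continuous_snd.sub continuous_const).tendsto _
      simpa using h.norm
    exact squeeze_zero_norm (fun p => le_of_eq (hUiso _ _)) hb
  have h2 : Tendsto (fun p : ℝ × Y => U p.1 y₀) (𝓝 (s₀, y₀)) (𝓝 (U s₀ y₀)) :=
    ((hUcont y₀).tendsto s₀).comp (continuous_fst.tendsto (s₀, y₀))
  have h3 := h1.add h2
  simp only [zero_add] at h3
  have heq : (fun p : ℝ × Y => U p.1 (p.2 - y₀) + U p.1 y₀) = fun p : ℝ × Y => U p.1 p.2 := by
    funext p; rw [map_sub]; abel
  rw [heq] at h3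
  exact h3

open Filter Topology Asymptotics

lemma keyDeriv {Y : Type*} [NormedAddCommGroup Y] [NormedSpace ℝ Y]
    (U : ℝ → Y →L[ℝ] Y) (Jinv : Y →L[ℝ] Y)
    (hUiso : ∀ (s : ℝ) (y : Y), ‖U s y‖ = ‖y‖)
    (hUcont : ∀ y : Y, Continuous fun s : ℝ => U s y)
    (hgen : ∀ (y : Y) (s : ℝ), HasDerivAt (fun s : ℝ => U s (Jinv y)) (U s y) s)
    (ε : ℝ) (hε : ε ≠ 0) {g g' : ℝ → Y} {τ₀ : ℝ}
    (hg : HasDerivAt g (g' τ₀) τ₀) :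
    HasDerivAt (fun τ => U (-τ / ε) (Jinv (g τ)))
      (U (-τ₀ / ε) (Jinv (g' τ₀)) - (1 / ε) • U (-τ₀ / ε) (g τ₀)) τ₀ := by
  have hB : HasDerivAt (fun τ : ℝ => U (-τ / ε) (Jinv (g τ₀)))
      ((-(1 / ε)) • U (-τ₀ / ε) (g τ₀)) τ₀ := by
    have hh : HasDerivAt (fun τ : ℝ => -τ / ε) (-(1 / ε)) τ₀ := by
      simpa [neg_div] using (hasDerivAt_neg τ₀).div_const ε
    exact (hgen (g τ₀) (-τ₀ / ε)).scomp τ₀ hh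
  have hA : HasDerivAt (fun τ : ℝ => U (-τ / ε) (Jinv (g τ - g τ₀)))
      (U (-τ₀ / ε) (Jinv (g' τ₀))) τ₀ := by
    rw [hasDerivAt_iff_isLittleO]
    have hgo : (fun τ => g τ - g τ₀ - (τ - τ₀) • g' τ₀) =o[𝓝 τ₀] fun τ => τ - τ₀ :=
      hasDerivAt_iff_isLittleO.mp hg
    have h₁ : (fun τ : ℝ => U (-τ / ε) (Jinv (g τ - g τ₀ - (τ - τ₀) • g' τ₀)))
        =o[𝓝 τ₀] fun τ => τ - τ₀ := by
      refine (IsBigO.of_bound ‖Jinv‖ ?_).trans_isLittleO hgo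
      exact Eventually.of_forall fun τ => by
        rw [hUiso]; exact Jinv.le_opNorm _
    have h₂ : (fun τ : ℝ => (τ - τ₀) •
        (U (-τ / ε) (Jinv (g' τ₀)) - U (-τ₀ / ε) (Jinv (g' τ₀))))
        =o[𝓝 τ₀] fun τ => τ - τ₀ := by
      rw [isLittleO_iff]
      intro c hc
      have hw : Tendsto (fun τ : ℝ => ‖U (-τ / ε) (Jinv (g' τ₀)) - U (-τ₀ / ε) (Jinv (g' τ₀))‖)
          (𝓝 τ₀) (𝓝 0) := by
        have hcont : Continuous fun τ : ℝ => U (-τ / ε) (Jinv (g' τ₀)) :=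
          (hUcont _).comp (by continuity)
        have h : Tendsto (fun τ : ℝ => U (-τ / ε) (Jinv (g' τ₀)) - U (-τ₀ / ε) (Jinv (g' τ₀)))
            (𝓝 τ₀) (𝓝 (U (-τ₀ / ε) (Jinv (g' τ₀)) - U (-τ₀ / ε) (Jinv (g' τ₀)))) :=
          (hcont.sub continuous_const).tendsto τ₀
        rw [sub_self] at h
        simpa using h.norm
      filter_upwards [hw.eventually (gt_mem_nhds hc)] with τ hτ
      rw [norm_smul]
      calc ‖(τ - τ₀ : ℝ)‖ * ‖U (-τ / ε) (Jinv (g' τ₀)) - U (-τ₀ / ε) (Jinv (g' τ₀))‖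
          ≤ ‖(τ - τ₀ : ℝ)‖ * c := by
            exact mul_le_mul_of_nonneg_left hτ.le (norm_nonneg _)
        _ = c * ‖(τ - τ₀ : ℝ)‖ := mul_comm _ _
    have heq : (fun τ : ℝ => U (-τ / ε) (Jinv (g τ - g τ₀)) -
        U (-τ₀ / ε) (Jinv (g τ₀ - g τ₀)) - (τ - τ₀) • U (-τ₀ / ε) (Jinv (g' τ₀)))
        = fun τ : ℝ => U (-τ / ε) (Jinv (g τ - g τ₀ - (τ - τ₀) • g' τ₀)) +
          (τ - τ₀) • (U (-τ / ε) (Jinv (g' τ₀)) - U (-τ₀ / ε) (Jinv (g' τ₀))) := by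
      funext τ
      simp only [sub_self, map_zero, map_sub, map_smul, smul_sub]
      abel
    rw [heq]
    exact h₁.add h₂
  have hsum := hA.add hB
  have hfun : (fun τ : ℝ => U (-τ / ε) (Jinv (g τ - g τ₀)) + U (-τ / ε) (Jinv (g τ₀)))
      = fun τ : ℝ => U (-τ / ε) (Jinv (g τ)) := by
    funext τ; simp [map_sub]
  change HasDerivAt (fun τ : ℝ => U (-τ / ε) (Jinv (g τ - g τ₀)) + U (-τ / ε) (Jinv (g τ₀))) _ τ₀ at hsum
  rw [hfun] at hsum
  convert hsum using 1
  simp [sub_eq_add_neg, neg_smul]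
open Filter Topology Asymptotics MeasureTheory intervalIntegral Set


/-- Integration by parts against the fast unitary group: if `J` is anti-self-adjoint
with bounded inverse `Jinv` (`‖Jinv‖ ≤ C₀`), `U` denotes the unitary group generated
by `J` (encoded by the group laws, the isometry property, the generator relation
`d/ds U(s) J⁻¹ y = U(s) y` and the commutation of `J⁻¹` with the group), and
`g` is `C¹` on `[t₀, t₀+T]` with `‖g‖ ≤ M₀`, `‖g'‖ ≤ M₁`, then
`‖∫_{t₀}^{t} e^{((t-τ)/ε)J} g(τ) dτ‖ ≤ ε C₀ (2M₀ + T M₁)`. -/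
theorem oscillatory_forcing_bound
    {Y : Type*} [NormedAddCommGroup Y] [NormedSpace ℝ Y] [CompleteSpace Y]
    (U : ℝ → Y →L[ℝ] Y) (Jinv : Y →L[ℝ] Y)
    (C₀ M₀ M₁ T t₀ ε : ℝ) (hε : 0 < ε) (hT : 0 ≤ T)
    (hU0 : U 0 = ContinuousLinearMap.id ℝ Y)
    (hUgrp : ∀ s t : ℝ, U (s + t) = (U s).comp (U t))
    (hUiso : ∀ (s : ℝ) (y : Y), ‖U s y‖ = ‖y‖)
    (hUcont : ∀ y : Y, Continuous fun s : ℝ => U s y)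
    (hgen : ∀ (y : Y) (s : ℝ), HasDerivAt (fun s : ℝ => U s (Jinv y)) (U s y) s)
    (hcomm : ∀ (s : ℝ) (y : Y), U s (Jinv y) = Jinv (U s y))
    (hJinv : ‖Jinv‖ ≤ C₀)
    (g g' : ℝ → Y)
    (hg : ∀ t ∈ Set.Icc t₀ (t₀ + T), HasDerivAt g (g' t) t)
    (hgM : ∀ t ∈ Set.Icc t₀ (t₀ + T), ‖g t‖ ≤ M₀)
    (hg'M : ∀ t ∈ Set.Icc t₀ (t₀ + T), ‖g' t‖ ≤ M₁) :
    ∀ t ∈ Set.Icc t₀ (t₀ + T),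
      ‖∫ τ in t₀..t, U ((t - τ) / ε) (g τ)‖ ≤ ε * C₀ * (2 * M₀ + T * M₁) := by
  intro t ht
  obtain ⟨ht₁, ht₂⟩ := ht
  have htmem : t ∈ Set.Icc t₀ (t₀ + T) := ⟨ht₁, ht₂⟩
  have ht₀mem : t₀ ∈ Set.Icc t₀ (t₀ + T) := ⟨le_rfl, by linarith⟩
  have hC₀ : 0 ≤ C₀ := le_trans (norm_nonneg _) hJinv
  have hM₀ : 0 ≤ M₀ := le_trans (norm_nonneg _) (hgM t htmem)
  have hM₁ : 0 ≤ M₁ := le_trans (norm_nonneg _) (hg'M t htmem)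
  have hεne : ε ≠ 0 := ne_of_gt hε
  have hsub : Set.uIcc t₀ t ⊆ Set.Icc t₀ (t₀ + T) := by
    rw [Set.uIcc_of_le ht₁]; exact Set.Icc_subset_Icc le_rfl ht₂
  have hsubo : Set.uIoc t₀ t ⊆ Set.Icc t₀ (t₀ + T) := by
    rw [Set.uIoc_of_le ht₁]
    exact fun x hx => ⟨hx.1.le, le_trans hx.2 ht₂⟩
  -- joint continuity
  have hj : Continuous fun p : ℝ × Y => U p.1 p.2 := Ujoint U hUiso hUcont
  -- continuity / integrability of main integrand
  have hgc : ContinuousOn g (Set.uIcc t₀ t) := fun τ hτ =>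
    ((hg τ (hsub hτ)).continuousAt).continuousWithinAt
  have hUg_cont : ContinuousOn (fun τ : ℝ => U (-τ / ε) (g τ)) (Set.uIcc t₀ t) :=
    hj.comp_continuousOn (f := fun τ : ℝ => (-τ / ε, g τ))
      (((continuous_id.neg.div_const ε).continuousOn).prodMk hgc)
  have hIntg : IntervalIntegrable (fun τ : ℝ => U (-τ / ε) (g τ)) volume t₀ t :=
    hUg_cont.intervalIntegrable
  -- factor out U (t/ε)
  have hfac : ∀ τ : ℝ, U ((t - τ) / ε) (g τ) = U (t / ε) (U (-τ / ε) (g τ)) := by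
    intro τ
    have h1 : (t - τ) / ε = t / ε + -τ / ε := by ring
    rw [h1, hUgrp]; rfl
  have hred : ∫ τ in t₀..t, U ((t - τ) / ε) (g τ)
      = U (t / ε) (∫ τ in t₀..t, U (-τ / ε) (g τ)) := by
    rw [← (U (t / ε)).intervalIntegral_comp_comm hIntg]
    exact intervalIntegral.integral_congr fun τ _ => hfac τ
  rw [hred, hUiso]
  -- primitive and its derivative
  set V : ℝ → Y := fun τ => (-ε) • U (-τ / ε) (Jinv (g τ)) with hV
  set φ : ℝ → Y := fun τ => U (-τ / ε) (g τ) + (-ε) • U (-τ / ε) (Jinv (g' τ)) with hφ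
  have hVderiv : ∀ τ ∈ Set.uIcc t₀ t, HasDerivAt V (φ τ) τ := by
    intro τ hτ
    have h := (keyDeriv U Jinv hUiso hUcont hgen ε hεne (hg τ (hsub hτ))).const_smul (-ε)
    convert h using 1
    · rfl
    rw [smul_sub, smul_smul]
    have : (-ε) * (1 / ε) = -1 := by field_simp
    rw [this]
    simp [hφ]
    abel
  -- integrability of the g' part
  have hf₂meas : AEStronglyMeasurable (fun τ : ℝ => (-ε) • U (-τ / ε) (Jinv (g' τ)))
      (volume.restrict (Set.uIoc t₀ t)) := by
    have hψ : StronglyMeasurable (fun τ : ℝ => (-ε) • U (-τ / ε) (Jinv (deriv g τ))) := by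
      have hd : StronglyMeasurable (deriv g) := stronglyMeasurable_deriv g
      have hpair : StronglyMeasurable (fun τ : ℝ => ((-τ / ε : ℝ), Jinv (deriv g τ))) :=
        ((continuous_id.neg.div_const ε).stronglyMeasurable).prodMk
          (Jinv.continuous.comp_stronglyMeasurable hd)
      exact (hj.comp_stronglyMeasurable hpair).const_smul (-ε)
    refine hψ.aestronglyMeasurable.congr ?_
    filter_upwards [ae_restrict_mem measurableSet_uIoc] with τ hτ
    have : deriv g τ = g' τ := (hg τ (hsubo hτ)).deriv
    rw [this]
  have hbound₂ : ∀ τ ∈ Set.uIoc t₀ t, ‖(-ε) • U (-τ / ε) (Jinv (g' τ))‖ ≤ ε * (C₀ * M₁) := by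
    intro τ hτ
    rw [norm_smul, hUiso]
    have h1 : ‖Jinv (g' τ)‖ ≤ C₀ * M₁ := by
      calc ‖Jinv (g' τ)‖ ≤ ‖Jinv‖ * ‖g' τ‖ := Jinv.le_opNorm _
        _ ≤ C₀ * M₁ := mul_le_mul hJinv (hg'M τ (hsubo hτ)) (norm_nonneg _) hC₀
    have h2 : ‖(-ε : ℝ)‖ = ε := by rw [norm_neg, Real.norm_eq_abs, abs_of_pos hε]
    rw [h2]
    exact mul_le_mul_of_nonneg_left h1 hε.le
  have hIntf₂ : IntervalIntegrable (fun τ : ℝ => (-ε) • U (-τ / ε) (Jinv (g' τ))) volume t₀ t := by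
    rw [intervalIntegrable_iff]
    refine Integrable.mono' (g := fun _ => ε * (C₀ * M₁))
      ((integrableOn_const_iff (C := ε * (C₀ * M₁))).mpr (Or.inr measure_Ioc_lt_top)) hf₂meas ?_
    filter_upwards [ae_restrict_mem measurableSet_uIoc] with τ hτ
    exact hbound₂ τ hτ
  have hIntφ : IntervalIntegrable φ volume t₀ t := hIntg.add hIntf₂
  -- FTC
  have hFTC : ∫ τ in t₀..t, φ τ = V t - V t₀ :=
    intervalIntegral.integral_eq_sub_of_hasDerivAt hVderiv hIntφ
  have hsplit : ∫ τ in t₀..t, φ τ = (∫ τ in t₀..t, U (-τ / ε) (g τ))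
      + ∫ τ in t₀..t, (-ε) • U (-τ / ε) (Jinv (g' τ)) :=
    intervalIntegral.integral_add hIntg hIntf₂
  have hI : (∫ τ in t₀..t, U (-τ / ε) (g τ))
      = V t - V t₀ - ∫ τ in t₀..t, (-ε) • U (-τ / ε) (Jinv (g' τ)) := by
    rw [← hFTC, hsplit]; abel
  rw [hI]
  -- bounds
  have hVbnd : ∀ s ∈ Set.Icc t₀ (t₀ + T), ‖V s‖ ≤ ε * (C₀ * M₀) := by
    intro s hs
    have : ‖V s‖ = ε * ‖Jinv (g s)‖ := by
      rw [hV]; simp only []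
      rw [norm_smul, hUiso, norm_neg, Real.norm_eq_abs, abs_of_pos hε]
    rw [this]
    refine mul_le_mul_of_nonneg_left ?_ hε.le
    calc ‖Jinv (g s)‖ ≤ ‖Jinv‖ * ‖g s‖ := Jinv.le_opNorm _
      _ ≤ C₀ * M₀ := mul_le_mul hJinv (hgM s hs) (norm_nonneg _) hC₀
  have hint₂bnd : ‖∫ τ in t₀..t, (-ε) • U (-τ / ε) (Jinv (g' τ))‖ ≤ ε * (C₀ * M₁) * |t - t₀| :=
    intervalIntegral.norm_integral_le_of_norm_le_const hbound₂
  have habs : |t - t₀| ≤ T := by rw [abs_of_nonneg (by linarith)]; linarith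
  calc ‖V t - V t₀ - ∫ τ in t₀..t, (-ε) • U (-τ / ε) (Jinv (g' τ))‖
      ≤ ‖V t - V t₀‖ + ‖∫ τ in t₀..t, (-ε) • U (-τ / ε) (Jinv (g' τ))‖ := norm_sub_le _ _
    _ ≤ (‖V t‖ + ‖V t₀‖) + ε * (C₀ * M₁) * |t - t₀| :=
        add_le_add (norm_sub_le _ _) hint₂bnd
    _ ≤ (ε * (C₀ * M₀) + ε * (C₀ * M₀)) + ε * (C₀ * M₁) * T := by
        refine add_le_add (add_le_add (hVbnd t htmem) (hVbnd t₀ ht₀mem)) ?_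
        exact mul_le_mul_of_nonneg_left habs (by positivity)
    _ = ε * C₀ * (2 * M₀ + T * M₁) := by ring
end

section
/- Let A be an n×n matrix, J an invertible antisymmetric m×m matrix with |J^{-1}| ≤ C₀, and B : ℝ → ℝ^{m×n} a C¹ matrix-valued function with |B(t)|, |B'(t)| ≤ M. Let E(t,s) be the evolution operator of ẏ = (J/ε + a(t))y with |a(t)| ≤ C₀, and let δx : [t₀, t₀+T] → ℝ^n satisfy |δx(t)|, |δẋ(t)| ≤ R. Then for t ∈ [t₀, t₀+T]: |∫_{t₀}^t E(t,τ) B(τ) δx(τ) dτ| ≤ C' ε, where C' depends only on C₀, M, R, T (not on ε). -/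
open scoped RealInnerProductSpace

set_option maxHeartbeats 1000000


section aux
variable {m : ℕ}

lemma sq_norm_le {x : EuclideanSpace ℝ (Fin m)} {c : ℝ} (hc : 0 ≤ c)
    (h : ‖x‖ ^ 2 ≤ c ^ 2) : ‖x‖ ≤ c := by
  nlinarith [norm_nonneg x]

lemma inner_sq_deriv {δ δ' : ℝ → EuclideanSpace ℝ (Fin m)}
    (hd : ∀ s, HasDerivAt δ (δ' s) s) (x : ℝ) :
    HasDerivAt (fun x => ⟪δ x, δ x⟫) (2 * ⟪δ' x, δ x⟫) x := by
  have := (hd x).inner ℝ (hd x)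
  convert this using 1 <;> try rfl
  rw [real_inner_comm (δ x) (δ' x)]; ring

/-- Upper Grönwall-type bound via the squared norm. -/
lemma gron_upper {C₀ : ℝ} {δ δ' : ℝ → EuclideanSpace ℝ (Fin m)}
    (hd : ∀ s, HasDerivAt δ (δ' s) s)
    (hb : ∀ s, ⟪δ' s, δ s⟫ ≤ C₀ * ‖δ s‖ ^ 2) :
    ∀ {s u : ℝ}, s ≤ u → ‖δ u‖ ≤ Real.exp (C₀ * (u - s)) * ‖δ s‖ := by
  intro s u hsu
  have hanti : Antitone (fun x => Real.exp (-(2 * C₀) * x) * ⟪δ x, δ x⟫) := by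
    have hq : ∀ x, HasDerivAt (fun x => Real.exp (-(2 * C₀) * x) * ⟪δ x, δ x⟫)
        (Real.exp (-(2 * C₀) * x) * (-(2 * C₀) * 1) * ⟪δ x, δ x⟫
          + Real.exp (-(2 * C₀) * x) * (2 * ⟪δ' x, δ x⟫)) x :=
      fun x => (((hasDerivAt_id x).const_mul (-(2 * C₀))).exp).mul (inner_sq_deriv hd x)
    apply antitone_of_deriv_nonpos
    · intro x; exact (hq x).differentiableAt
    · intro x
      rw [(hq x).deriv]
      have h1 : ⟪δ' x, δ x⟫ ≤ C₀ * ⟪δ x, δ x⟫ := by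
        rw [real_inner_self_eq_norm_sq]; exact hb x
      have h2 : (0:ℝ) ≤ ⟪δ x, δ x⟫ := real_inner_self_nonneg
      nlinarith [Real.exp_pos (-(2 * C₀) * x)]
  have hpu := hanti hsu
  simp only [real_inner_self_eq_norm_sq] at hpu
  apply sq_norm_le (by positivity)
  calc ‖δ u‖ ^ 2 = Real.exp (2 * C₀ * u) * (Real.exp (-(2 * C₀) * u) * ‖δ u‖ ^ 2) := by
        rw [← mul_assoc, ← Real.exp_add]
        have : 2 * C₀ * u + -(2 * C₀) * u = 0 := by ring
        rw [this, Real.exp_zero, one_mul]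
    _ ≤ Real.exp (2 * C₀ * u) * (Real.exp (-(2 * C₀) * s) * ‖δ s‖ ^ 2) :=
        mul_le_mul_of_nonneg_left hpu (Real.exp_pos _).le
    _ = (Real.exp (C₀ * (u - s)) * ‖δ s‖) ^ 2 := by
        rw [mul_pow, pow_two (Real.exp _), ← Real.exp_add, ← mul_assoc, ← Real.exp_add]
        congr 2
        ring

/-- Lower Grönwall-type bound via the squared norm. -/
lemma gron_lower {C₀ : ℝ} {δ δ' : ℝ → EuclideanSpace ℝ (Fin m)}
    (hd : ∀ s, HasDerivAt δ (δ' s) s)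
    (hb : ∀ s, -(C₀ * ‖δ s‖ ^ 2) ≤ ⟪δ' s, δ s⟫) :
    ∀ {s u : ℝ}, s ≤ u → ‖δ s‖ ≤ Real.exp (C₀ * (u - s)) * ‖δ u‖ := by
  intro s u hsu
  have hmono : Monotone (fun x => Real.exp ((2 * C₀) * x) * ⟪δ x, δ x⟫) := by
    have hq : ∀ x, HasDerivAt (fun x => Real.exp ((2 * C₀) * x) * ⟪δ x, δ x⟫)
        (Real.exp ((2 * C₀) * x) * ((2 * C₀) * 1) * ⟪δ x, δ x⟫
          + Real.exp ((2 * C₀) * x) * (2 * ⟪δ' x, δ x⟫)) x :=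
      fun x => (((hasDerivAt_id x).const_mul (2 * C₀)).exp).mul (inner_sq_deriv hd x)
    apply monotone_of_deriv_nonneg
    · intro x; exact (hq x).differentiableAt
    · intro x
      rw [(hq x).deriv]
      have h1 : -(C₀ * ⟪δ x, δ x⟫) ≤ ⟪δ' x, δ x⟫ := by
        rw [real_inner_self_eq_norm_sq]; exact hb x
      have h2 : (0:ℝ) ≤ ⟪δ x, δ x⟫ := real_inner_self_nonneg
      nlinarith [Real.exp_pos ((2 * C₀) * x)]
  have hpu := hmono hsu
  simp only [real_inner_self_eq_norm_sq] at hpu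
  apply sq_norm_le (by positivity)
  calc ‖δ s‖ ^ 2 = Real.exp (-(2 * C₀ * s)) * (Real.exp ((2 * C₀) * s) * ‖δ s‖ ^ 2) := by
        rw [← mul_assoc, ← Real.exp_add]
        have : -(2 * C₀ * s) + 2 * C₀ * s = 0 := by ring
        rw [this, Real.exp_zero, one_mul]
    _ ≤ Real.exp (-(2 * C₀ * s)) * (Real.exp ((2 * C₀) * u) * ‖δ u‖ ^ 2) :=
        mul_le_mul_of_nonneg_left hpu (Real.exp_pos _).le
    _ = (Real.exp (C₀ * (u - s)) * ‖δ u‖) ^ 2 := by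
        rw [mul_pow, pow_two (Real.exp _), ← Real.exp_add, ← mul_assoc, ← Real.exp_add]
        congr 2
        ring

end aux

section instances
variable {m : ℕ}
noncomputable instance instTowerEuc : IsScalarTower ℝ
    (EuclideanSpace ℝ (Fin m) →L[ℝ] EuclideanSpace ℝ (Fin m))
    (EuclideanSpace ℝ (Fin m) →L[ℝ] EuclideanSpace ℝ (Fin m)) :=
  ⟨fun c f g => by ext x; simp [ContinuousLinearMap.mul_apply]⟩
noncomputable instance instSMulCommEuc : SMulCommClass ℝ
    (EuclideanSpace ℝ (Fin m) →L[ℝ] EuclideanSpace ℝ (Fin m))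
    (EuclideanSpace ℝ (Fin m) →L[ℝ] EuclideanSpace ℝ (Fin m)) :=
  ⟨fun c f g => by ext x; simp [ContinuousLinearMap.mul_apply]⟩
end instances


section opderiv
variable {m : ℕ}

/-- Pointwise derivatives on a basis upgrade to operator-norm derivative (finite dim). -/
lemma hasDerivAt_clm_of_pointwise {F D : ℝ → (EuclideanSpace ℝ (Fin m) →L[ℝ] EuclideanSpace ℝ (Fin m))}
    (h : ∀ (y : EuclideanSpace ℝ (Fin m)) (τ : ℝ), HasDerivAt (fun τ => F τ y) (D τ y) τ)
    (τ : ℝ) : HasDerivAt F (D τ) τ := by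
  classical
  set b : Module.Basis (Fin m) ℝ (EuclideanSpace ℝ (Fin m)) := (EuclideanSpace.basisFun (Fin m) ℝ).toBasis
  set Ψl : (EuclideanSpace ℝ (Fin m) →L[ℝ] EuclideanSpace ℝ (Fin m)) ≃ₗ[ℝ]
      (Fin m → EuclideanSpace ℝ (Fin m)) :=
    (LinearMap.toContinuousLinearMap.symm.trans (b.constr ℝ).symm) with hΨl
  have hΨ_apply : ∀ (T : EuclideanSpace ℝ (Fin m) →L[ℝ] EuclideanSpace ℝ (Fin m)) (i : Fin m),
      Ψl T i = T (b i) := by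
    intro T i
    have h1 : (b.constr ℝ) ((b.constr ℝ).symm (T : EuclideanSpace ℝ (Fin m) →ₗ[ℝ] EuclideanSpace ℝ (Fin m)))
        = (T : EuclideanSpace ℝ (Fin m) →ₗ[ℝ] EuclideanSpace ℝ (Fin m)) :=
      (b.constr ℝ).apply_symm_apply _
    have := congrArg (fun (f : EuclideanSpace ℝ (Fin m) →ₗ[ℝ] EuclideanSpace ℝ (Fin m)) => f (b i)) h1
    try simp only at this
    rw [Module.Basis.constr_basis] at this
    simpa [Ψl] using this.symm
  set Ψ := Ψl.toContinuousLinearEquiv with hΨ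
  have hg : HasDerivAt (fun τ => Ψ (F τ)) (Ψ (D τ)) τ := by
    rw [hasDerivAt_pi]
    intro i
    have : (fun τ => Ψ (F τ) i) = fun τ => F τ (b i) := by
      funext τ; rw [hΨ]; exact hΨ_apply (F τ) i
    rw [this, hΨ]
    rw [show (Ψl.toContinuousLinearEquiv) (D τ) i = D τ (b i) from hΨ_apply (D τ) i]
    exact h (b i) τ
  have := ((Ψ.symm : (Fin m → EuclideanSpace ℝ (Fin m)) →L[ℝ]
      (EuclideanSpace ℝ (Fin m) →L[ℝ] EuclideanSpace ℝ (Fin m))).hasFDerivAt.comp_hasDerivAt τ hg)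
  simp only [Function.comp_def, ContinuousLinearEquiv.coe_coe,
    ContinuousLinearEquiv.symm_apply_apply] at this
  exact this
end opderiv

/-- Key oscillatory-integral estimate: if `E(t,s)` is the evolution operator of
`ẏ = (J/ε + a(t)) y` with `J` invertible antisymmetric (`|J⁻¹| ≤ C₀`), `|a| ≤ C₀`,
`B` is `C¹` with `|B|, |B'| ≤ M`, and `δx` is `C¹` with `|δx|, |δẋ| ≤ R`, then
`‖∫_{t₀}^t E(t,τ) B(τ) δx(τ) dτ‖ ≤ C' ε` on `[t₀, t₀+T]`, with `C'` depending only
on `C₀, M, R, T` and not on `ε`. -/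
theorem oscillatory_evolution_integral_estimate
    (n m : ℕ) (C₀ M R T t₀ : ℝ) (hT : 0 ≤ T) (hC₀ : 0 ≤ C₀) (hM : 0 ≤ M) (hR : 0 ≤ R) :
    ∃ C' : ℝ, ∀ ε : ℝ, 0 < ε →
      ∀ J : EuclideanSpace ℝ (Fin m) ≃L[ℝ] EuclideanSpace ℝ (Fin m),
        (∀ u v : EuclideanSpace ℝ (Fin m), ⟪J u, v⟫ = -⟪u, J v⟫) →
        ‖(J.symm : EuclideanSpace ℝ (Fin m) →L[ℝ] EuclideanSpace ℝ (Fin m))‖ ≤ C₀ →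
      ∀ a : ℝ → (EuclideanSpace ℝ (Fin m) →L[ℝ] EuclideanSpace ℝ (Fin m)),
        (∀ t, ‖a t‖ ≤ C₀) →
      ∀ E : ℝ → ℝ → (EuclideanSpace ℝ (Fin m) →L[ℝ] EuclideanSpace ℝ (Fin m)),
        (∀ s, E s s = ContinuousLinearMap.id ℝ (EuclideanSpace ℝ (Fin m))) →
        (∀ (s : ℝ) (y : EuclideanSpace ℝ (Fin m)) (t : ℝ),
          HasDerivAt (fun t : ℝ => E t s y) (ε⁻¹ • J (E t s y) + a t (E t s y)) t) →
      ∀ B B' : ℝ → (EuclideanSpace ℝ (Fin n) →L[ℝ] EuclideanSpace ℝ (Fin m)),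
        (∀ t, HasDerivAt B (B' t) t) → (∀ t, ‖B t‖ ≤ M) → (∀ t, ‖B' t‖ ≤ M) →
      ∀ δx δx' : ℝ → EuclideanSpace ℝ (Fin n),
        (∀ t, HasDerivAt δx (δx' t) t) → (∀ t, ‖δx t‖ ≤ R) → (∀ t, ‖δx' t‖ ≤ R) →
      ∀ t ∈ Set.Icc t₀ (t₀ + T),
        ‖∫ τ in t₀..t, E t τ (B τ (δx τ))‖ ≤ C' * ε := by
  classical
  set K : ℝ := Real.exp (C₀ * T) with hK
  set P : ℝ := C₀ * (M * R) with hP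
  set Q : ℝ := C₀ * (M * R + M * R) with hQ
  have hKpos : 0 < K := Real.exp_pos _
  have hPnn : 0 ≤ P := by positivity
  have hQnn : 0 ≤ Q := by positivity
  refine ⟨K * (T * (K * Q) + (K * P + K * P) + T * (K * (C₀ * P))), ?_⟩
  intro ε hε J hJ hJinv a ha E hEid hEderiv B B' hB hBM hB'M δx δx' hδx hδxR hδx'R t ht
  obtain ⟨ht₀, htT⟩ := ht
  set Jc : (EuclideanSpace ℝ (Fin m)) →L[ℝ] (EuclideanSpace ℝ (Fin m)) := (J : (EuclideanSpace ℝ (Fin m)) →L[ℝ] (EuclideanSpace ℝ (Fin m))) with hJcdef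
  -- antisymmetry consequence
  have hJ0 : ∀ z : (EuclideanSpace ℝ (Fin m)), ⟪Jc z, z⟫ = 0 := by
    intro z
    have h1 := hJ z z
    have h2 : ⟪z, J z⟫ = ⟪J z, z⟫ := real_inner_comm _ _
    have : ⟪J z, z⟫ = 0 := by rw [h2] at h1; linarith
    simpa [Jc] using this
  -- the ODE right-hand side has controlled inner product with the solution
  have hODE1 : ∀ (τ : ℝ) (z : (EuclideanSpace ℝ (Fin m))), ⟪ε⁻¹ • J z + a τ z, z⟫ ≤ C₀ * ‖z‖ ^ 2 := by
    intro τ z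
    have hx : ⟪ε⁻¹ • J z + a τ z, z⟫ = ε⁻¹ * ⟪Jc z, z⟫ + ⟪a τ z, z⟫ := by
      rw [inner_add_left, real_inner_smul_left]; rfl
    have habs : |⟪a τ z, z⟫| ≤ C₀ * ‖z‖ ^ 2 := by
      calc |⟪a τ z, z⟫| ≤ ‖a τ z‖ * ‖z‖ := abs_real_inner_le_norm _ _
        _ ≤ (C₀ * ‖z‖) * ‖z‖ := by
            have h1 : ‖a τ z‖ ≤ ‖a τ‖ * ‖z‖ := (a τ).le_opNorm z
            have h2 : ‖a τ‖ * ‖z‖ ≤ C₀ * ‖z‖ :=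
              mul_le_mul_of_nonneg_right (ha τ) (norm_nonneg z)
            nlinarith [norm_nonneg z]
        _ = C₀ * ‖z‖ ^ 2 := by ring
    rw [hx, hJ0 z]
    have := (abs_le.mp habs).2
    linarith
  have hODE2 : ∀ (τ : ℝ) (z : (EuclideanSpace ℝ (Fin m))), -(C₀ * ‖z‖ ^ 2) ≤ ⟪ε⁻¹ • J z + a τ z, z⟫ := by
    intro τ z
    have hx : ⟪ε⁻¹ • J z + a τ z, z⟫ = ε⁻¹ * ⟪Jc z, z⟫ + ⟪a τ z, z⟫ := by
      rw [inner_add_left, real_inner_smul_left]; rfl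
    have habs : |⟪a τ z, z⟫| ≤ C₀ * ‖z‖ ^ 2 := by
      calc |⟪a τ z, z⟫| ≤ ‖a τ z‖ * ‖z‖ := abs_real_inner_le_norm _ _
        _ ≤ (C₀ * ‖z‖) * ‖z‖ := by
            have h1 : ‖a τ z‖ ≤ ‖a τ‖ * ‖z‖ := (a τ).le_opNorm z
            have h2 : ‖a τ‖ * ‖z‖ ≤ C₀ * ‖z‖ :=
              mul_le_mul_of_nonneg_right (ha τ) (norm_nonneg z)
            nlinarith [norm_nonneg z]
        _ = C₀ * ‖z‖ ^ 2 := by ring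
    rw [hx, hJ0 z]
    have := (abs_le.mp habs).1
    linarith
  -- the fundamental solution F
  set F : ℝ → ((EuclideanSpace ℝ (Fin m)) →L[ℝ] (EuclideanSpace ℝ (Fin m))) := fun τ => E τ t₀ with hFdef
  have hFpt : ∀ (y : (EuclideanSpace ℝ (Fin m))) (τ : ℝ),
      HasDerivAt (fun τ => F τ y) (ε⁻¹ • J (F τ y) + a τ (F τ y)) τ :=
    fun y τ => hEderiv t₀ y τ
  have hFt₀ : ∀ y : (EuclideanSpace ℝ (Fin m)), F t₀ y = y := by
    intro y; simp [F, hEid t₀]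
  -- upper and lower bounds for curves satisfying the ODE
  have hcurve_up : ∀ (δf : ℝ → (EuclideanSpace ℝ (Fin m))),
      (∀ s, HasDerivAt δf (ε⁻¹ • J (δf s) + a s (δf s)) s) →
      ∀ {s u : ℝ}, s ≤ u → ‖δf u‖ ≤ Real.exp (C₀ * (u - s)) * ‖δf s‖ := by
    intro δf hd s u hsu
    exact gron_upper hd (fun s => hODE1 s (δf s)) hsu
  have hcurve_lo : ∀ (δf : ℝ → (EuclideanSpace ℝ (Fin m))),
      (∀ s, HasDerivAt δf (ε⁻¹ • J (δf s) + a s (δf s)) s) →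
      ∀ {s u : ℝ}, s ≤ u → ‖δf s‖ ≤ Real.exp (C₀ * (u - s)) * ‖δf u‖ := by
    intro δf hd s u hsu
    exact gron_lower hd (fun s => hODE2 s (δf s)) hsu
  have hexpK : ∀ {s u : ℝ}, u - s ≤ T → Real.exp (C₀ * (u - s)) ≤ K := by
    intro s u h
    exact Real.exp_le_exp.mpr (mul_le_mul_of_nonneg_left h hC₀)
  -- bound for F
  have hFb : ∀ τ, t₀ ≤ τ → τ ≤ t₀ + T → ∀ y : (EuclideanSpace ℝ (Fin m)), ‖F τ y‖ ≤ K * ‖y‖ := by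
    intro τ h1 h2 y
    have h3 := hcurve_up (fun τ => F τ y) (hFpt y) h1
    simp only [hFt₀] at h3
    refine h3.trans ?_
    exact mul_le_mul_of_nonneg_right (hexpK (by linarith)) (norm_nonneg y)
  -- injectivity and invertibility of F τ
  have hFlow : ∀ τ, t₀ ≤ τ → ∀ y : (EuclideanSpace ℝ (Fin m)), ‖y‖ ≤ Real.exp (C₀ * (τ - t₀)) * ‖F τ y‖ := by
    intro τ h1 y
    have h3 := hcurve_lo (fun τ => F τ y) (hFpt y) h1
    simpa only [hFt₀] using h3
  have hFunit : ∀ τ, t₀ ≤ τ → IsUnit (F τ) := by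
    intro τ hτ
    have hinj : Function.Injective (F τ) := by
      intro y y' hyy'
      have h0 : F τ (y - y') = 0 := by rw [map_sub, hyy', sub_self]
      have := hFlow τ hτ (y - y')
      rw [h0] at this
      simp only [norm_zero, mul_zero] at this
      have : ‖y - y'‖ = 0 := le_antisymm this (norm_nonneg _)
      rwa [norm_sub_eq_zero_iff] at this
    have hsurj : Function.Surjective (F τ) :=
      LinearMap.injective_iff_surjective.mp hinj
    let e : (EuclideanSpace ℝ (Fin m)) ≃ₗ[ℝ] (EuclideanSpace ℝ (Fin m)) := LinearEquiv.ofBijective ((F τ) : (EuclideanSpace ℝ (Fin m)) →ₗ[ℝ] (EuclideanSpace ℝ (Fin m))) ⟨hinj, hsurj⟩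
    let ec : (EuclideanSpace ℝ (Fin m)) ≃L[ℝ] (EuclideanSpace ℝ (Fin m)) := e.toContinuousLinearEquiv
    refine ⟨⟨F τ, (ec.symm : (EuclideanSpace ℝ (Fin m)) →L[ℝ] (EuclideanSpace ℝ (Fin m))), ?_, ?_⟩, rfl⟩
    · ext y
      have : F τ (ec.symm y) = ec (ec.symm y) := rfl
      simp [ContinuousLinearMap.mul_apply, this]
    · ext y
      have : F τ y = ec y := rfl
      simp [ContinuousLinearMap.mul_apply, this]
  set G : ℝ → ((EuclideanSpace ℝ (Fin m)) →L[ℝ] (EuclideanSpace ℝ (Fin m))) := fun τ => Ring.inverse (F τ) with hGdef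
  have hFG : ∀ τ, t₀ ≤ τ → ∀ w : (EuclideanSpace ℝ (Fin m)), F τ (G τ w) = w := by
    intro τ hτ w
    have h1 : F τ * G τ = 1 := Ring.mul_inverse_cancel _ (hFunit τ hτ)
    calc F τ (G τ w) = (F τ * G τ) w := rfl
      _ = w := by rw [h1]; rfl
  have hGb : ∀ τ, t₀ ≤ τ → τ ≤ t₀ + T → ∀ w : (EuclideanSpace ℝ (Fin m)), ‖G τ w‖ ≤ K * ‖w‖ := by
    intro τ h1 h2 w
    have := hFlow τ h1 (G τ w)
    rw [hFG τ h1 w] at this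
    refine this.trans ?_
    exact mul_le_mul_of_nonneg_right (hexpK (by linarith)) (norm_nonneg w)
  -- operator derivative of F
  set Lop : ℝ → ((EuclideanSpace ℝ (Fin m)) →L[ℝ] (EuclideanSpace ℝ (Fin m))) := fun τ => ε⁻¹ • Jc + a τ with hLopdef
  have hFop : ∀ τ, HasDerivAt F (Lop τ * F τ) τ := by
    apply hasDerivAt_clm_of_pointwise
    intro y τ
    exact hFpt y τ
  -- derivative of G
  have hGderiv : ∀ τ, t₀ ≤ τ → HasDerivAt G (-(G τ * Lop τ)) τ := by
    intro τ hτ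
    obtain ⟨u, hu⟩ := hFunit τ hτ
    have h1 : HasFDerivAt Ring.inverse
        (-ContinuousLinearMap.mulLeftRight ℝ ((EuclideanSpace ℝ (Fin m)) →L[ℝ] (EuclideanSpace ℝ (Fin m))) ↑u⁻¹ ↑u⁻¹) (F τ) := by
      rw [← hu]; exact hasFDerivAt_ringInverse u
    have h2 := h1.comp_hasDerivAt τ (hFop τ)
    have h3 : (↑u⁻¹ : (EuclideanSpace ℝ (Fin m)) →L[ℝ] (EuclideanSpace ℝ (Fin m))) = G τ := by
      rw [hGdef]; simp only; rw [← hu, Ring.inverse_unit]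
    have h4 : (-ContinuousLinearMap.mulLeftRight ℝ ((EuclideanSpace ℝ (Fin m)) →L[ℝ] (EuclideanSpace ℝ (Fin m))) ↑u⁻¹ ↑u⁻¹) (Lop τ * F τ)
        = -(G τ * Lop τ) := by
      rw [ContinuousLinearMap.neg_apply, ContinuousLinearMap.mulLeftRight_apply, h3]
      have h5 : F τ * G τ = 1 := Ring.mul_inverse_cancel _ (hFunit τ hτ)
      rw [mul_assoc (G τ), mul_assoc (Lop τ), h5, mul_one]
    rw [← h4]
    exact h2
  -- setup of B-related functions
  set Js : (EuclideanSpace ℝ (Fin m)) →L[ℝ] (EuclideanSpace ℝ (Fin m)) :=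
    (J.symm : (EuclideanSpace ℝ (Fin m)) →L[ℝ] (EuclideanSpace ℝ (Fin m))) with hJsdef
  set f : ℝ → (EuclideanSpace ℝ (Fin m)) := fun τ => B τ (δx τ) with hfdef
  set h : ℝ → (EuclideanSpace ℝ (Fin m)) := fun τ => Js (f τ) with hhdef
  set h' : ℝ → (EuclideanSpace ℝ (Fin m)) :=
    fun τ => Js (B' τ (δx τ) + B τ (δx' τ)) with hh'def
  have hf_cont : Continuous f := by
    apply Continuous.clm_apply
    · exact continuous_iff_continuousAt.mpr (fun τ => (hB τ).continuousAt)
    · exact continuous_iff_continuousAt.mpr (fun τ => (hδx τ).continuousAt)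
  have hhd : ∀ τ, HasDerivAt h (h' τ) τ := by
    intro τ
    exact Js.hasFDerivAt.comp_hasDerivAt τ ((hB τ).clm_apply (hδx τ))
  have hJf : ∀ τ, Jc (h τ) = f τ := by
    intro τ
    simp [Jc, Js, h]
  have hfb : ∀ τ, ‖f τ‖ ≤ M * R := by
    intro τ
    calc ‖B τ (δx τ)‖ ≤ ‖B τ‖ * ‖δx τ‖ := (B τ).le_opNorm _
      _ ≤ M * R := mul_le_mul (hBM τ) (hδxR τ) (norm_nonneg _) hM
  have hhb : ∀ τ, ‖h τ‖ ≤ P := by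
    intro τ
    calc ‖Js (f τ)‖ ≤ ‖Js‖ * ‖f τ‖ := Js.le_opNorm _
      _ ≤ C₀ * (M * R) := mul_le_mul hJinv (hfb τ) (norm_nonneg _) hC₀
  have hh'b : ∀ τ, ‖h' τ‖ ≤ Q := by
    intro τ
    have hsum : ‖B' τ (δx τ) + B τ (δx' τ)‖ ≤ M * R + M * R := by
      refine (norm_add_le _ _).trans ?_
      gcongr
      · calc ‖B' τ (δx τ)‖ ≤ ‖B' τ‖ * ‖δx τ‖ := (B' τ).le_opNorm _
          _ ≤ M * R := mul_le_mul (hB'M τ) (hδxR τ) (norm_nonneg _) hM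
      · calc ‖B τ (δx' τ)‖ ≤ ‖B τ‖ * ‖δx' τ‖ := (B τ).le_opNorm _
          _ ≤ M * R := mul_le_mul (hBM τ) (hδx'R τ) (norm_nonneg _) hM
    calc ‖Js _‖ ≤ ‖Js‖ * ‖B' τ (δx τ) + B τ (δx' τ)‖ := Js.le_opNorm _
      _ ≤ C₀ * (M * R + M * R) := mul_le_mul hJinv hsum (norm_nonneg _) hC₀
  -- the function φ and its derivative
  set φ : ℝ → (EuclideanSpace ℝ (Fin m)) := fun τ => G τ (h τ) with hφdef
  set φ' : ℝ → (EuclideanSpace ℝ (Fin m)) :=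
    fun τ => (-(G τ * Lop τ)) (h τ) + G τ (h' τ) with hφ'def
  have hφd : ∀ τ, t₀ ≤ τ → HasDerivAt φ (φ' τ) τ := by
    intro τ hτ
    exact (hGderiv τ hτ).clm_apply (hhd τ)
  have hφb : ∀ τ, t₀ ≤ τ → τ ≤ t₀ + T → ‖φ τ‖ ≤ K * P := by
    intro τ h1 h2
    calc ‖G τ (h τ)‖ ≤ K * ‖h τ‖ := hGb τ h1 h2 _
      _ ≤ K * P := mul_le_mul_of_nonneg_left (hhb τ) hKpos.le
  set g1 : ℝ → (EuclideanSpace ℝ (Fin m)) := fun τ => G τ (h' τ) with hg1def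
  have hg1b : ∀ τ, t₀ ≤ τ → τ ≤ t₀ + T → ‖g1 τ‖ ≤ K * Q := by
    intro τ h1 h2
    calc ‖G τ (h' τ)‖ ≤ K * ‖h' τ‖ := hGb τ h1 h2 _
      _ ≤ K * Q := mul_le_mul_of_nonneg_left (hh'b τ) hKpos.le
  -- continuity of G on [t₀, t]
  have hGcontOn : ContinuousOn G (Set.Icc t₀ t) := by
    intro τ hτ
    exact ((hGderiv τ hτ.1).continuousAt).continuousWithinAt
  have huIcc : Set.uIcc t₀ t = Set.Icc t₀ t := Set.uIcc_of_le ht₀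
  have hcont_Gf : ContinuousOn (fun τ => G τ (f τ)) (Set.Icc t₀ t) :=
    hGcontOn.clm_apply hf_cont.continuousOn
  have hint_Gf : IntervalIntegrable (fun τ => G τ (f τ)) MeasureTheory.volume t₀ t := by
    apply ContinuousOn.intervalIntegrable
    rwa [huIcc]
  have hBc : Continuous B := continuous_iff_continuousAt.mpr (fun τ => (hB τ).continuousAt)
  have hδxc : Continuous δx := continuous_iff_continuousAt.mpr (fun τ => (hδx τ).continuousAt)
  have hB'sm : MeasureTheory.StronglyMeasurable B' := by
    have : B' = deriv B := funext fun τ => ((hB τ).deriv).symm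
    rw [this]; exact stronglyMeasurable_deriv B
  have hδx'sm : MeasureTheory.StronglyMeasurable δx' := by
    have : δx' = deriv δx := funext fun τ => ((hδx τ).deriv).symm
    rw [this]; exact stronglyMeasurable_deriv δx
  have hh'sm : MeasureTheory.StronglyMeasurable h' := by
    have h1 : MeasureTheory.StronglyMeasurable (fun τ => B' τ (δx τ)) :=
      isBoundedBilinearMap_apply.continuous.comp_stronglyMeasurable
        (hB'sm.prodMk hδxc.stronglyMeasurable)
    have h2 : MeasureTheory.StronglyMeasurable (fun τ => B τ (δx' τ)) :=
      isBoundedBilinearMap_apply.continuous.comp_stronglyMeasurable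
        (hBc.stronglyMeasurable.prodMk hδx'sm)
    exact Js.continuous.comp_stronglyMeasurable (h1.add h2)
  have hint_g1 : IntervalIntegrable g1 MeasureTheory.volume t₀ t := by
    rw [intervalIntegrable_iff, Set.uIoc_of_le ht₀]
    have hGm : MeasureTheory.AEStronglyMeasurable G
        (MeasureTheory.volume.restrict (Set.Ioc t₀ t)) :=
      (hGcontOn.mono Set.Ioc_subset_Icc_self).aestronglyMeasurable measurableSet_Ioc
    have hg1m : MeasureTheory.AEStronglyMeasurable g1
        (MeasureTheory.volume.restrict (Set.Ioc t₀ t)) :=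
      isBoundedBilinearMap_apply.continuous.comp_aestronglyMeasurable
        (hGm.prodMk hh'sm.aestronglyMeasurable.restrict)
    refine MeasureTheory.Integrable.mono' (g := fun _ => K * Q)
      (MeasureTheory.integrableOn_const measure_Ioc_lt_top.ne) hg1m ?_
    filter_upwards [MeasureTheory.ae_restrict_mem measurableSet_Ioc] with x hx
    exact hg1b x hx.1.le (hx.2.trans htT)
  -- bound for φ'
  have hLopb : ∀ τ (z : (EuclideanSpace ℝ (Fin m))),
      ‖Lop τ z‖ ≤ (ε⁻¹ * ‖Jc‖ + C₀) * ‖z‖ := by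
    intro τ z
    have : Lop τ z = ε⁻¹ • Jc z + a τ z := rfl
    rw [this]
    refine (norm_add_le _ _).trans ?_
    have h1 : ‖ε⁻¹ • Jc z‖ = ε⁻¹ * ‖Jc z‖ := by
      rw [norm_smul, Real.norm_eq_abs, abs_of_pos (inv_pos.mpr hε)]
    rw [h1, add_mul]
    refine add_le_add ?_ ?_
    · calc ε⁻¹ * ‖Jc z‖ ≤ ε⁻¹ * (‖Jc‖ * ‖z‖) :=
          mul_le_mul_of_nonneg_left (Jc.le_opNorm z) (inv_pos.mpr hε).le
        _ = ε⁻¹ * ‖Jc‖ * ‖z‖ := by ring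
    · calc ‖a τ z‖ ≤ ‖a τ‖ * ‖z‖ := (a τ).le_opNorm z
        _ ≤ C₀ * ‖z‖ := mul_le_mul_of_nonneg_right (ha τ) (norm_nonneg z)
  have hφ'b : ∀ τ, t₀ ≤ τ → τ ≤ t₀ + T →
      ‖φ' τ‖ ≤ K * ((ε⁻¹ * ‖Jc‖ + C₀) * P) + K * Q := by
    intro τ h1 h2
    have e1 : ‖(-(G τ * Lop τ)) (h τ)‖ = ‖G τ (Lop τ (h τ))‖ := by
      rw [ContinuousLinearMap.neg_apply, norm_neg, ContinuousLinearMap.mul_apply]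
    refine (norm_add_le _ _).trans ?_
    gcongr
    · rw [e1]
      calc ‖G τ (Lop τ (h τ))‖ ≤ K * ‖Lop τ (h τ)‖ := hGb τ h1 h2 _
        _ ≤ K * ((ε⁻¹ * ‖Jc‖ + C₀) * ‖h τ‖) :=
            mul_le_mul_of_nonneg_left (hLopb τ _) hKpos.le
        _ ≤ K * ((ε⁻¹ * ‖Jc‖ + C₀) * P) := by
            have hnn : (0:ℝ) ≤ ε⁻¹ * ‖Jc‖ + C₀ := by positivity
            exact mul_le_mul_of_nonneg_left
              (mul_le_mul_of_nonneg_left (hhb τ) hnn) hKpos.le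
    · exact hg1b τ h1 h2
  -- integrability of φ'
  have hφ'int : IntervalIntegrable φ' MeasureTheory.volume t₀ t := by
    rw [intervalIntegrable_iff, Set.uIoc_of_le ht₀]
    have h1 : MeasureTheory.IntegrableOn (deriv φ) (Set.Ioc t₀ t) := by
      refine MeasureTheory.Integrable.mono'
        (g := fun _ => K * ((ε⁻¹ * ‖Jc‖ + C₀) * P) + K * Q)
        (MeasureTheory.integrableOn_const measure_Ioc_lt_top.ne)
        (stronglyMeasurable_deriv φ).aestronglyMeasurable ?_
      filter_upwards [MeasureTheory.ae_restrict_mem measurableSet_Ioc] with x hx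
      rw [(hφd x hx.1.le).deriv]
      exact hφ'b x hx.1.le (hx.2.trans htT)
    exact h1.congr_fun (fun x hx => (hφd x hx.1.le).deriv) measurableSet_Ioc
  -- FTC
  have hFTC : (∫ τ in t₀..t, φ' τ) = φ t - φ t₀ := by
    apply intervalIntegral.integral_eq_sub_of_hasDerivAt
    · intro τ hτ
      rw [huIcc] at hτ
      exact hφd τ hτ.1
    · exact hφ'int
  -- the residual term w
  set w : ℝ → (EuclideanSpace ℝ (Fin m)) :=
    fun τ => g1 τ - φ' τ - ε⁻¹ • G τ (f τ) with hwdef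
  have hwint : IntervalIntegrable w MeasureTheory.volume t₀ t :=
    (hint_g1.sub hφ'int).sub (hint_Gf.smul ε⁻¹)
  have hwval : ∀ τ, t₀ ≤ τ → w τ = G τ (a τ (h τ)) := by
    intro τ hτ
    have hJc_pt : Jc (h τ) = ε • Lop τ (h τ) - ε • a τ (h τ) := by
      have e1 : Lop τ (h τ) = ε⁻¹ • Jc (h τ) + a τ (h τ) := rfl
      rw [e1, smul_add, smul_smul, mul_inv_cancel₀ hε.ne', one_smul]
      abel
    have e2 : G τ (f τ) = G τ (Jc (h τ)) := by rw [hJf τ]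
    have e3 : G τ (Jc (h τ)) = ε • G τ (Lop τ (h τ)) - ε • G τ (a τ (h τ)) := by
      rw [hJc_pt, map_sub, map_smul, map_smul]
    have e4 : ε⁻¹ • G τ (f τ) = G τ (Lop τ (h τ)) - G τ (a τ (h τ)) := by
      rw [e2, e3]
      simp only [smul_sub, smul_smul, inv_mul_cancel₀ hε.ne', one_smul]
    have e5 : φ' τ = -(G τ (Lop τ (h τ))) + g1 τ := by
      rw [hφ'def]
      simp only [ContinuousLinearMap.neg_apply, ContinuousLinearMap.mul_apply]; try rfl
    rw [hwdef]
    simp only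
    rw [e4, e5]
    abel
  have hwb : ∀ τ, t₀ ≤ τ → τ ≤ t₀ + T → ‖w τ‖ ≤ K * (C₀ * P) := by
    intro τ h1 h2
    rw [hwval τ h1]
    calc ‖G τ (a τ (h τ))‖ ≤ K * ‖a τ (h τ)‖ := hGb τ h1 h2 _
      _ ≤ K * (C₀ * ‖h τ‖) := by
          refine mul_le_mul_of_nonneg_left ?_ hKpos.le
          calc ‖a τ (h τ)‖ ≤ ‖a τ‖ * ‖h τ‖ := (a τ).le_opNorm _
            _ ≤ C₀ * ‖h τ‖ := mul_le_mul_of_nonneg_right (ha τ) (norm_nonneg _)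
      _ ≤ K * (C₀ * P) := by
          refine mul_le_mul_of_nonneg_left (mul_le_mul_of_nonneg_left (hhb τ) hC₀) hKpos.le
  -- pointwise algebraic identity
  have hGf_eq : ∀ τ : ℝ, G τ (f τ) = ε • (g1 τ - φ' τ - w τ) := by
    intro τ
    rw [hwdef]
    simp only
    rw [show g1 τ - φ' τ - (g1 τ - φ' τ - ε⁻¹ • G τ (f τ)) = ε⁻¹ • G τ (f τ) by abel]
    rw [smul_smul, mul_inv_cancel₀ hε.ne', one_smul]
  -- splitting the integral
  have hsplit : (∫ τ in t₀..t, G τ (f τ))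
      = ε • ((∫ τ in t₀..t, g1 τ) - (φ t - φ t₀) - (∫ τ in t₀..t, w τ)) := by
    rw [← hFTC]
    rw [← intervalIntegral.integral_sub hint_g1 hφ'int,
      ← intervalIntegral.integral_sub (hint_g1.sub hφ'int) hwint,
      ← intervalIntegral.integral_smul]
    apply intervalIntegral.integral_congr
    intro τ _
    exact hGf_eq τ
  -- identification E t τ = F t ∘ G τ on the interval
  have hEG : ∀ τ ∈ Set.uIcc t₀ t, E t τ (B τ (δx τ)) = F t (G τ (f τ)) := by
    intro τ hτ
    rw [huIcc] at hτ
    set y : (EuclideanSpace ℝ (Fin m)) := B τ (δx τ) with hydef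
    set δf : ℝ → (EuclideanSpace ℝ (Fin m)) := fun s => E s τ y - F s (G τ y) with hδfdef
    have hδfd : ∀ s, HasDerivAt δf (ε⁻¹ • J (δf s) + a s (δf s)) s := by
      intro s
      have h3 := (hEderiv τ y s).sub (hEderiv t₀ (G τ y) s)
      convert h3 using 1 <;> try rfl
      rw [hδfdef]
      simp only [map_sub, smul_sub]
      abel
    have hδfτ : δf τ = 0 := by
      rw [hδfdef]
      simp only
      rw [hFG τ hτ.1 y, hEid τ]
      simp
    have h4 := hcurve_up δf hδfd hτ.2
    rw [hδfτ] at h4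
    simp only [norm_zero, mul_zero] at h4
    have h5 : δf t = 0 := by
      have := norm_nonneg (δf t)
      have h6 : ‖δf t‖ = 0 := le_antisymm h4 this
      exact norm_eq_zero.mp h6
    have h7 : E t τ y = F t (G τ y) := by
      rw [hδfdef] at h5
      simp only at h5
      exact sub_eq_zero.mp h5
    exact h7
  have hrw : (∫ τ in t₀..t, E t τ (B τ (δx τ))) = F t (∫ τ in t₀..t, G τ (f τ)) := by
    rw [intervalIntegral.integral_congr hEG]
    exact (F t).intervalIntegral_comp_comm hint_Gf
  -- final estimate
  rw [hrw]
  have hbound1 : ‖∫ τ in t₀..t, g1 τ‖ ≤ T * (K * Q) := by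
    have := intervalIntegral.norm_integral_le_of_norm_le_const
      (C := K * Q) (f := g1) (a := t₀) (b := t) ?_
    · refine this.trans ?_
      rw [abs_of_nonneg (by linarith : (0:ℝ) ≤ t - t₀)]
      have : t - t₀ ≤ T := by linarith
      calc K * Q * (t - t₀) ≤ K * Q * T :=
          mul_le_mul_of_nonneg_left this (by positivity)
        _ = T * (K * Q) := by ring
    · intro x hx
      rw [Set.uIoc_of_le ht₀] at hx
      exact hg1b x hx.1.le (hx.2.trans htT)
  have hboundw : ‖∫ τ in t₀..t, w τ‖ ≤ T * (K * (C₀ * P)) := by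
    have := intervalIntegral.norm_integral_le_of_norm_le_const
      (C := K * (C₀ * P)) (f := w) (a := t₀) (b := t) ?_
    · refine this.trans ?_
      rw [abs_of_nonneg (by linarith : (0:ℝ) ≤ t - t₀)]
      have : t - t₀ ≤ T := by linarith
      calc K * (C₀ * P) * (t - t₀) ≤ K * (C₀ * P) * T :=
          mul_le_mul_of_nonneg_left this (by positivity)
        _ = T * (K * (C₀ * P)) := by ring
    · intro x hx
      rw [Set.uIoc_of_le ht₀] at hx
      exact hwb x hx.1.le (hx.2.trans htT)
  have hboundφ : ‖φ t - φ t₀‖ ≤ K * P + K * P := by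
    refine (norm_sub_le _ _).trans ?_
    gcongr
    · exact hφb t ht₀ htT
    · exact hφb t₀ le_rfl (by linarith)
  have hX : ‖(∫ τ in t₀..t, g1 τ) - (φ t - φ t₀) - (∫ τ in t₀..t, w τ)‖
      ≤ T * (K * Q) + (K * P + K * P) + T * (K * (C₀ * P)) := by
    refine (norm_sub_le _ _).trans ?_
    gcongr
    refine (norm_sub_le _ _).trans ?_
    gcongr
  have hGfI : ‖∫ τ in t₀..t, G τ (f τ)‖
      ≤ ε * (T * (K * Q) + (K * P + K * P) + T * (K * (C₀ * P))) := by
    rw [hsplit, norm_smul, Real.norm_eq_abs, abs_of_pos hε]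
    exact mul_le_mul_of_nonneg_left hX hε.le
  calc ‖F t (∫ τ in t₀..t, G τ (f τ))‖ ≤ K * ‖∫ τ in t₀..t, G τ (f τ)‖ :=
      hFb t ht₀ htT _
    _ ≤ K * (ε * (T * (K * Q) + (K * P + K * P) + T * (K * (C₀ * P)))) :=
      mul_le_mul_of_nonneg_left hGfI hKpos.le
    _ = K * (T * (K * Q) + (K * P + K * P) + T * (K * (C₀ * P))) * ε := by ring
end

section
/- (Block diagonalization, bounded case.) Let X, Y be Banach spaces, A ∈ L(X), J an anti-self-adjoint operator on the Hilbert space Y with bounded inverse, and let B₁ ∈ L(X,Y), B₂ ∈ L(Y,X), a ∈ L(X), b ∈ L(Y) be bounded operators. Consider the pair of quadratic operator equations (J + εb) L₁ - ε L₁ (A + a + B₂ L₁) + ε B₁ = 0 and L₂(ε B₁ L₂ + J + ε b) - ε(A+a) L₂ - ε B₂ = 0 for (L₁, L₂) ∈ L(X,Y) × L(Y,X). Then there exists ε₀ > 0 such that for every ε ∈ [0, ε₀) these equations have a unique small solution (L₁^ε, L₂^ε) with ‖L₁^ε‖ + ‖L₂^ε‖ ≤ C ε, depending continuously on ε, with (L₁⁰,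 L₂⁰) = (0,0). -/
open ContinuousLinearMap

set_option linter.unusedSectionVars false

section BDaux
variable {X Y : Type*} [NormedAddCommGroup X] [NormedSpace ℝ X]
    [NormedAddCommGroup Y] [NormedSpace ℝ Y]

noncomputable def bdG (A a : X →L[ℝ] X) (J : Y ≃L[ℝ] Y) (B₁ : X →L[ℝ] Y) (B₂ : Y →L[ℝ] X)
    (b : Y →L[ℝ] Y) :
    ℝ × ((X →L[ℝ] Y) × (Y →L[ℝ] X)) → ℝ × ((X →L[ℝ] Y) × (Y →L[ℝ] X)) := fun p =>
  (p.1,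
   ((J : Y →L[ℝ] Y) + p.1 • b).comp p.2.1
      - p.1 • (p.2.1.comp (A + a + B₂.comp p.2.1)) + p.1 • B₁,
   p.2.2.comp (p.1 • B₁.comp p.2.2 + (J : Y →L[ℝ] Y) + p.1 • b)
      - p.1 • ((A + a).comp p.2.2) - p.1 • B₂)

variable (X Y) in
noncomputable def bdπ0 : ℝ × ((X →L[ℝ] Y) × (Y →L[ℝ] X)) →L[ℝ] ℝ :=
  ContinuousLinearMap.fst ℝ ℝ _

variable (X Y) in
noncomputable def bdπ1 : ℝ × ((X →L[ℝ] Y) × (Y →L[ℝ] X)) →L[ℝ] (X →L[ℝ] Y) :=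
  (ContinuousLinearMap.fst ℝ (X →L[ℝ] Y) (Y →L[ℝ] X)).comp (ContinuousLinearMap.snd ℝ ℝ _)

variable (X Y) in
noncomputable def bdπ2 : ℝ × ((X →L[ℝ] Y) × (Y →L[ℝ] X)) →L[ℝ] (Y →L[ℝ] X) :=
  (ContinuousLinearMap.snd ℝ (X →L[ℝ] Y) (Y →L[ℝ] X)).comp (ContinuousLinearMap.snd ℝ ℝ _)

@[simp] lemma bdπ0_apply (p : ℝ × ((X →L[ℝ] Y) × (Y →L[ℝ] X))) : bdπ0 X Y p = p.1 := rfl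
@[simp] lemma bdπ1_apply (p : ℝ × ((X →L[ℝ] Y) × (Y →L[ℝ] X))) : bdπ1 X Y p = p.2.1 := rfl
@[simp] lemma bdπ2_apply (p : ℝ × ((X →L[ℝ] Y) × (Y →L[ℝ] X))) : bdπ2 X Y p = p.2.2 := rfl

noncomputable def bdFwd (J : Y ≃L[ℝ] Y) (B₁ : X →L[ℝ] Y) (B₂ : Y →L[ℝ] X) :
    ℝ × ((X →L[ℝ] Y) × (Y →L[ℝ] X)) →L[ℝ] ℝ × ((X →L[ℝ] Y) × (Y →L[ℝ] X)) :=
  (bdπ0 X Y).prod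
    (((compL ℝ X Y Y (J : Y →L[ℝ] Y)).comp (bdπ1 X Y) + (bdπ0 X Y).smulRight B₁).prod
      (((compL ℝ Y Y X).flip (J : Y →L[ℝ] Y)).comp (bdπ2 X Y) - (bdπ0 X Y).smulRight B₂))

noncomputable def bdBwd (J : Y ≃L[ℝ] Y) (B₁ : X →L[ℝ] Y) (B₂ : Y →L[ℝ] X) :
    ℝ × ((X →L[ℝ] Y) × (Y →L[ℝ] X)) →L[ℝ] ℝ × ((X →L[ℝ] Y) × (Y →L[ℝ] X)) :=
  (bdπ0 X Y).prod
    (((compL ℝ X Y Y (J.symm : Y →L[ℝ] Y)).comp (bdπ1 X Y - (bdπ0 X Y).smulRight B₁)).prod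
      (((compL ℝ Y Y X).flip (J.symm : Y →L[ℝ] Y)).comp (bdπ2 X Y + (bdπ0 X Y).smulRight B₂)))

@[simp] lemma bdFwd_apply (J : Y ≃L[ℝ] Y) (B₁ : X →L[ℝ] Y) (B₂ : Y →L[ℝ] X)
    (p : ℝ × ((X →L[ℝ] Y) × (Y →L[ℝ] X))) :
    bdFwd J B₁ B₂ p = (p.1, (J : Y →L[ℝ] Y).comp p.2.1 + p.1 • B₁,
      p.2.2.comp (J : Y →L[ℝ] Y) - p.1 • B₂) := rfl

@[simp] lemma bdBwd_apply (J : Y ≃L[ℝ] Y) (B₁ : X →L[ℝ] Y) (B₂ : Y →L[ℝ] X)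
    (p : ℝ × ((X →L[ℝ] Y) × (Y →L[ℝ] X))) :
    bdBwd J B₁ B₂ p = (p.1, (J.symm : Y →L[ℝ] Y).comp (p.2.1 - p.1 • B₁),
      (p.2.2 + p.1 • B₂).comp (J.symm : Y →L[ℝ] Y)) := rfl

noncomputable def bdEquiv (J : Y ≃L[ℝ] Y) (B₁ : X →L[ℝ] Y) (B₂ : Y →L[ℝ] X) :
    (ℝ × ((X →L[ℝ] Y) × (Y →L[ℝ] X))) ≃L[ℝ] ℝ × ((X →L[ℝ] Y) × (Y →L[ℝ] X)) :=
  ContinuousLinearEquiv.equivOfInverse (bdFwd J B₁ B₂) (bdBwd J B₁ B₂)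
    (by intro p; refine Prod.ext rfl (Prod.ext ?_ ?_) <;> · ext x; simp)
    (by intro p; refine Prod.ext rfl (Prod.ext ?_ ?_) <;> · ext x; simp)

@[simp] lemma bdEquiv_apply (J : Y ≃L[ℝ] Y) (B₁ : X →L[ℝ] Y) (B₂ : Y →L[ℝ] X)
    (p : ℝ × ((X →L[ℝ] Y) × (Y →L[ℝ] X))) :
    bdEquiv J B₁ B₂ p = (p.1, (J : Y →L[ℝ] Y).comp p.2.1 + p.1 • B₁,
      p.2.2.comp (J : Y →L[ℝ] Y) - p.1 • B₂) := rfl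

set_option maxHeartbeats 1000000 in
lemma bdG_hasStrictFDerivAt (A a : X →L[ℝ] X) (J : Y ≃L[ℝ] Y) (B₁ : X →L[ℝ] Y)
    (B₂ : Y →L[ℝ] X) (b : Y →L[ℝ] Y) :
    HasStrictFDerivAt (bdG A a J B₁ B₂ b)
      ((bdEquiv J B₁ B₂ : ℝ × ((X →L[ℝ] Y) × (Y →L[ℝ] X)) →L[ℝ] _)) (0, 0) := by
  set p₀ : ℝ × ((X →L[ℝ] Y) × (Y →L[ℝ] X)) := (0, 0) with hp₀
  have hfst : HasStrictFDerivAt (fun p : ℝ × ((X →L[ℝ] Y) × (Y →L[ℝ] X)) => p.1)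
      (bdπ0 X Y) p₀ := (bdπ0 X Y).hasStrictFDerivAt
  have hd1 : HasStrictFDerivAt (fun p : ℝ × ((X →L[ℝ] Y) × (Y →L[ℝ] X)) => p.2.1)
      (bdπ1 X Y) p₀ := (bdπ1 X Y).hasStrictFDerivAt
  have hd2 : HasStrictFDerivAt (fun p : ℝ × ((X →L[ℝ] Y) × (Y →L[ℝ] X)) => p.2.2)
      (bdπ2 X Y) p₀ := (bdπ2 X Y).hasStrictFDerivAt
  have hsb : HasStrictFDerivAt (fun p : ℝ × ((X →L[ℝ] Y) × (Y →L[ℝ] X)) => p.1 • b)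
      ((bdπ0 X Y).smulRight b) p₀ := ((bdπ0 X Y).smulRight b).hasStrictFDerivAt
  have hc1 := hsb.const_add (J : Y →L[ℝ] Y)
  have hT1 := hc1.clm_comp hd1
  have hB2c : HasStrictFDerivAt
      (fun p : ℝ × ((X →L[ℝ] Y) × (Y →L[ℝ] X)) => B₂.comp p.2.1)
      ((compL ℝ X Y X B₂).comp (bdπ1 X Y)) p₀ :=
    ((compL ℝ X Y X B₂).comp (bdπ1 X Y)).hasStrictFDerivAt
  have hinner := hB2c.const_add (A + a)
  have hW := hd1.clm_comp hinner
  have hT2 := hfst.smul hW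
  have hT3 : HasStrictFDerivAt (fun p : ℝ × ((X →L[ℝ] Y) × (Y →L[ℝ] X)) => p.1 • B₁)
      ((bdπ0 X Y).smulRight B₁) p₀ := ((bdπ0 X Y).smulRight B₁).hasStrictFDerivAt
  have hg1 := (hT1.sub hT2).add hT3
  have hBL : HasStrictFDerivAt
      (fun p : ℝ × ((X →L[ℝ] Y) × (Y →L[ℝ] X)) => B₁.comp p.2.2)
      ((compL ℝ Y X Y B₁).comp (bdπ2 X Y)) p₀ :=
    ((compL ℝ Y X Y B₁).comp (bdπ2 X Y)).hasStrictFDerivAt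
  have hd2' := ((hfst.smul hBL).add_const (J : Y →L[ℝ] Y)).add hsb
  have hU1 := hd2.clm_comp hd2'
  have hAa : HasStrictFDerivAt
      (fun p : ℝ × ((X →L[ℝ] Y) × (Y →L[ℝ] X)) => (A + a).comp p.2.2)
      ((compL ℝ Y X X (A + a)).comp (bdπ2 X Y)) p₀ :=
    ((compL ℝ Y X X (A + a)).comp (bdπ2 X Y)).hasStrictFDerivAt
  have hU2 := hfst.smul hAa
  have hU3 : HasStrictFDerivAt (fun p : ℝ × ((X →L[ℝ] Y) × (Y →L[ℝ] X)) => p.1 • B₂)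
      ((bdπ0 X Y).smulRight B₂) p₀ := ((bdπ0 X Y).smulRight B₂).hasStrictFDerivAt
  have hg2 := (hU1.sub hU2).sub hU3
  have hGd := hfst.prodMk (hg1.prodMk hg2)
  refine hGd.congr_fderiv ?_
  refine ContinuousLinearMap.ext fun q => ?_
  refine Prod.ext rfl (Prod.ext ?_ ?_) <;> · ext x; simp [hp₀]
end BDaux

open scoped RealInnerProductSpace

set_option maxHeartbeats 1000000 in
/-- Block diagonalization, bounded case (Lemma 7.1): the quadratic operator equations
`(J + εb)L₁ - εL₁(A + a + B₂L₁) + εB₁ = 0` and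
`L₂(εB₁L₂ + J + εb) - ε(A+a)L₂ - εB₂ = 0` admit, for `ε ∈ [0, ε₀)`, a unique small
solution `(L₁^ε, L₂^ε)` with `‖L₁^ε‖ + ‖L₂^ε‖ ≤ Cε`, depending continuously on `ε`,
with `(L₁⁰, L₂⁰) = (0,0)`. -/
theorem block_diagonalization_bounded
    {X Y : Type*} [NormedAddCommGroup X] [NormedSpace ℝ X] [CompleteSpace X]
    [NormedAddCommGroup Y] [InnerProductSpace ℝ Y] [CompleteSpace Y]
    (A a : X →L[ℝ] X) (J : Y ≃L[ℝ] Y)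
    (hJ : ∀ u v : Y, ⟪J u, v⟫ = -⟪u, J v⟫)
    (B₁ : X →L[ℝ] Y) (B₂ : Y →L[ℝ] X) (b : Y →L[ℝ] Y) :
    ∃ ε₀ > (0:ℝ), ∃ C : ℝ, ∃ L : ℝ → (X →L[ℝ] Y) × (Y →L[ℝ] X),
      ContinuousOn L (Set.Ico 0 ε₀) ∧ L 0 = 0 ∧
      (∀ ε ∈ Set.Ico (0:ℝ) ε₀,
        ((J : Y →L[ℝ] Y) + ε • b).comp (L ε).1
            - ε • ((L ε).1.comp (A + a + B₂.comp (L ε).1)) + ε • B₁ = 0 ∧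
        (L ε).2.comp (ε • B₁.comp (L ε).2 + (J : Y →L[ℝ] Y) + ε • b)
            - ε • ((A + a).comp (L ε).2) - ε • B₂ = 0 ∧
        ‖(L ε).1‖ + ‖(L ε).2‖ ≤ C * ε) ∧
      ∃ δ > (0:ℝ), ∀ ε ∈ Set.Ico (0:ℝ) ε₀,
        ∀ (L₁ : X →L[ℝ] Y) (L₂ : Y →L[ℝ] X), ‖L₁‖ ≤ δ → ‖L₂‖ ≤ δ →
          ((J : Y →L[ℝ] Y) + ε • b).comp L₁
              - ε • (L₁.comp (A + a + B₂.comp L₁)) + ε • B₁ = 0 →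
          L₂.comp (ε • B₁.comp L₂ + (J : Y →L[ℝ] Y) + ε • b)
              - ε • ((A + a).comp L₂) - ε • B₂ = 0 →
          (L₁, L₂) = L ε := by
  clear hJ
  have hf' := bdG_hasStrictFDerivAt A a J B₁ B₂ b
  have hG0 : bdG A a J B₁ B₂ b (0, 0) = (0, 0) := by
    simp [bdG]
  set Φ := hf'.toOpenPartialHomeomorph (bdG A a J B₁ B₂ b) with hΦ
  have hΦcoe : ⇑Φ = bdG A a J B₁ B₂ b := rfl
  have hsrc : ((0:ℝ), (0 : (X →L[ℝ] Y) × (Y →L[ℝ] X))) ∈ Φ.source :=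
    hf'.mem_toOpenPartialHomeomorph_source
  have htgt0 : ((0:ℝ), (0 : (X →L[ℝ] Y) × (Y →L[ℝ] X))) ∈ Φ.target := by
    have := hf'.image_mem_toOpenPartialHomeomorph_target
    rwa [hG0] at this
  -- Lipschitz bound for the inverse
  have hloc := hf'.to_localInverse
  rw [hG0] at hloc
  obtain ⟨K, U, hU, hlip⟩ := hloc.exists_lipschitzOnWith
  have hinv_def : hf'.localInverse (bdG A a J B₁ B₂ b) _ _ = ⇑Φ.symm := rfl
  rw [hinv_def] at hlip
  -- radii
  obtain ⟨r₁, hr₁pos, hball₁⟩ := Metric.isOpen_iff.1 Φ.open_source _ hsrc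
  obtain ⟨r₂, hr₂pos, hball₂⟩ :=
    Metric.mem_nhds_iff.1 (Filter.inter_mem (Φ.open_target.mem_nhds htgt0) hU)
  set ε₀ : ℝ := min r₁ r₂ with hε₀
  have hε₀pos : 0 < ε₀ := lt_min hr₁pos hr₂pos
  have hε₀r₁ : ε₀ ≤ r₁ := min_le_left _ _
  have hε₀r₂ : ε₀ ≤ r₂ := min_le_right _ _
  -- the solution map
  refine ⟨ε₀, hε₀pos, 2 * K, fun ε => (Φ.symm (ε, 0)).2, ?_, ?_, ?_, ?_⟩
  · -- continuity
    have h1 : ContinuousOn (fun ε : ℝ => Φ.symm (ε, 0)) (Set.Ico 0 ε₀) := by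
      refine Φ.continuousOn_symm.comp
        ((continuous_id.prodMk continuous_const).continuousOn) ?_
      intro ε hε
      refine (hball₂ ?_).1
      rw [Metric.mem_ball, Prod.dist_eq]
      simp only [Real.dist_eq, sub_zero, dist_self, abs_of_nonneg hε.1]
      exact max_lt (lt_of_lt_of_le hε.2 hε₀r₂) hr₂pos
    exact continuous_snd.comp_continuousOn h1
  · -- L 0 = 0
    have h0 : Φ.symm ((0:ℝ), (0 : (X →L[ℝ] Y) × (Y →L[ℝ] X))) = (0, 0) := by
      have := Φ.left_inv hsrc
      rwa [hΦcoe, hG0] at this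
    show (Φ.symm ((0:ℝ), 0)).2 = 0
    rw [h0]
  · -- equations and bound
    intro ε hε
    beta_reduce
    have hmem : ((ε, 0) : ℝ × ((X →L[ℝ] Y) × (Y →L[ℝ] X))) ∈ Metric.ball
        ((0:ℝ), (0 : (X →L[ℝ] Y) × (Y →L[ℝ] X))) r₂ := by
      rw [Metric.mem_ball, Prod.dist_eq]
      simp only [Real.dist_eq, sub_zero, dist_self, abs_of_nonneg hε.1]
      exact max_lt (lt_of_lt_of_le hε.2 hε₀r₂) hr₂pos
    have htgt : ((ε, 0) : ℝ × ((X →L[ℝ] Y) × (Y →L[ℝ] X))) ∈ Φ.target := (hball₂ hmem).1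
    set q := Φ.symm (ε, 0) with hq
    have hΦq : bdG A a J B₁ B₂ b q = (ε, 0) := by
      have := Φ.right_inv htgt
      rwa [hΦcoe] at this
    have hq1 : q.1 = ε := congrArg Prod.fst hΦq
    have hGq : bdG A a J B₁ B₂ b (ε, q.2) = (ε, 0) := by
      rw [← hq1, Prod.mk.eta, hq1]
      exact hΦq
    have heq1 := congrArg (fun p => p.2.1) hGq
    have heq2 := congrArg (fun p => p.2.2) hGq
    simp only [bdG, Prod.fst_zero, Prod.snd_zero] at heq1 heq2
    refine ⟨heq1, heq2, ?_⟩
    -- bound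
    have hqU : ((ε, 0) : ℝ × ((X →L[ℝ] Y) × (Y →L[ℝ] X))) ∈ U := (hball₂ hmem).2
    have h0U : ((0, 0) : ℝ × ((X →L[ℝ] Y) × (Y →L[ℝ] X))) ∈ U :=
      (hball₂ (Metric.mem_ball_self hr₂pos)).2
    have hinv0 : Φ.symm ((0:ℝ), (0 : (X →L[ℝ] Y) × (Y →L[ℝ] X))) = (0, 0) := by
      have := Φ.left_inv hsrc
      rwa [hΦcoe, hG0] at this
    have hd := hlip.dist_le_mul _ hqU _ h0U
    rw [hinv0] at hd
    have hdist : dist ((ε, 0) : ℝ × ((X →L[ℝ] Y) × (Y →L[ℝ] X))) (0, 0) = ε := by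
      rw [Prod.dist_eq]
      simp only [Real.dist_eq, sub_zero, dist_self, abs_of_nonneg hε.1]
      exact max_eq_left hε.1
    rw [hdist] at hd
    have hqn : ‖q‖ ≤ K * ε := by
      rw [← dist_zero_right]
      exact hd
    calc ‖q.2.1‖ + ‖q.2.2‖ ≤ ‖q.2‖ + ‖q.2‖ :=
          add_le_add (norm_fst_le q.2) (norm_snd_le q.2)
      _ ≤ ‖q‖ + ‖q‖ := add_le_add (norm_snd_le q) (norm_snd_le q)
      _ ≤ K * ε + K * ε := add_le_add hqn hqn
      _ = 2 * K * ε := by ring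
  · -- uniqueness
    refine ⟨ε₀ / 2, by positivity, ?_⟩
    intro ε hε L₁ L₂ hL₁ hL₂ he1 he2
    set p : ℝ × ((X →L[ℝ] Y) × (Y →L[ℝ] X)) := (ε, (L₁, L₂)) with hp
    have hpsrc : p ∈ Φ.source := by
      refine hball₁ ?_
      rw [Metric.mem_ball, Prod.dist_eq]
      refine max_lt ?_ ?_
      · simpa [hp, Real.dist_eq, abs_of_nonneg hε.1] using lt_of_lt_of_le hε.2 hε₀r₁
      · simp only [hp, Prod.dist_eq, Prod.fst_zero, Prod.snd_zero, dist_zero_right]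
        have h1 : ‖L₁‖ < r₁ := by
          calc ‖L₁‖ ≤ ε₀ / 2 := hL₁
          _ < ε₀ := by linarith
          _ ≤ r₁ := hε₀r₁
        have h2 : ‖L₂‖ < r₁ := by
          calc ‖L₂‖ ≤ ε₀ / 2 := hL₂
          _ < ε₀ := by linarith
          _ ≤ r₁ := hε₀r₁
        exact max_lt h1 h2
    have hΦp : bdG A a J B₁ B₂ b p = (ε, 0) := by
      simp only [bdG, hp]
      rw [he1, he2]
      rfl
    
    have := Φ.left_inv hpsrc
    rw [hΦcoe, hΦp] at this
    exact congrArg Prod.snd this.symm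
end

section
/- (Positivity of the energy on the center manifold.) Let H(ξ_c, u) = H₀(ξ_c) + H₁(ξ_c)·u + H₂(ξ_c)(u,u) + H₃(ξ_c, u), where H₀(0) = 0, DH₀(0) = 0, D²H₀(0)(ξ,ξ) ≥ c₀|ξ|², |H₁(ξ_c)| ≤ (c₁ + C'|ξ_c|)|ξ_c|, H₂(ξ_c)(u,u) ≥ (c₂ - C'|ξ_c|)|u|², H₃(ξ_c,0) = 0, D_u H₃(ξ_c, 0) = 0, |D²H₃| ≤ C₀ε, and c₀ c₂ - c₁² > 0. Then there exist r > 0 and c* > 0 and ε₀ > 0 such that for all ε ∈ [0, ε₀), H(ξ_c, u) ≥ c*(|ξ_c|² + |u|²) for all |ξ_c| ≤ r, |u| ≤ b; in particular H > 0 on this neighborhood except at the origin. -/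
lemma quad_lower (a bb c κ s t : ℝ) (hs : 0 ≤ s) (ht : 0 ≤ t) (hbb : 0 ≤ bb)
    (h1 : 0 ≤ a - κ) (h2 : 0 ≤ c - κ) (h3 : bb ^ 2 ≤ 4 * (a - κ) * (c - κ)) :
    κ * (s ^ 2 + t ^ 2) ≤ a * s ^ 2 - bb * s * t + c * t ^ 2 := by
  rcases eq_or_lt_of_le h1 with h1' | h1'
  · have hb0 : bb = 0 := by nlinarith [sq_nonneg bb]
    have ha : a = κ := by linarith
    subst ha hb0
    nlinarith [mul_nonneg h2 (sq_nonneg t)]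
  · nlinarith [sq_nonneg (2 * (a - κ) * s - bb * t), mul_nonneg (sub_nonneg.2 h3) (sq_nonneg t),
      mul_pos h1' h1', mul_nonneg (mul_nonneg hs ht) hbb]

lemma taylor2 {X : Type*} [NormedAddCommGroup X] [NormedSpace ℝ X]
    (H₀ : X → ℝ) (hH₀smooth : ContDiff ℝ 2 H₀) (hH₀0 : H₀ 0 = 0)
    (hDH₀0 : fderiv ℝ H₀ 0 = 0) (δ : ℝ) (hδ : 0 < δ) :
    ∃ r > (0:ℝ), ∀ ξ : X, ‖ξ‖ ≤ r →
      fderiv ℝ (fderiv ℝ H₀) 0 ξ ξ / 2 - δ * ‖ξ‖ ^ 2 ≤ H₀ ξ := by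
  set A := fderiv ℝ (fderiv ℝ H₀) 0 with hA
  have hderiv : ContDiff ℝ 1 (fderiv ℝ H₀) :=
    hH₀smooth.fderiv_right (by norm_num)
  have hdiff : Differentiable ℝ H₀ := hH₀smooth.differentiable (by norm_num)
  have hAderiv : HasFDerivAt (fderiv ℝ H₀) A 0 :=
    ((hderiv.differentiable one_ne_zero) 0).hasFDerivAt
  have hlo := hAderiv.isLittleO.bound hδ
  rw [Metric.eventually_nhds_iff_ball] at hlo
  obtain ⟨ρ, hρ, hball⟩ := hlo
  refine ⟨ρ/2, by positivity, fun ξ hξ => ?_⟩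
  have hbound : ∀ t ∈ Set.Icc (0:ℝ) 1,
      ‖fderiv ℝ H₀ (t • ξ) ξ - t * (A ξ ξ)‖ ≤ δ * ‖ξ‖ ^ 2 := by
    intro t ht
    have htξ : t • ξ ∈ Metric.ball (0:X) ρ := by
      rw [Metric.mem_ball, dist_zero_right, norm_smul, Real.norm_eq_abs,
        abs_of_nonneg ht.1]
      calc t * ‖ξ‖ ≤ 1 * ‖ξ‖ := by nlinarith [norm_nonneg ξ, ht.2]
        _ ≤ ρ/2 := by linarith
        _ < ρ := by linarith
    have h1 := hball _ htξ
    rw [sub_zero, hDH₀0] at h1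
    have h2 : fderiv ℝ H₀ (t • ξ) ξ - t * (A ξ ξ)
        = (fderiv ℝ H₀ (t • ξ) - (0:X →L[ℝ] ℝ) - A (t • ξ)) ξ := by
      simp [map_smul, smul_eq_mul]
    rw [h2]
    calc ‖(fderiv ℝ H₀ (t • ξ) - (0:X →L[ℝ] ℝ) - A (t • ξ)) ξ‖
        ≤ ‖fderiv ℝ H₀ (t • ξ) - (0:X →L[ℝ] ℝ) - A (t • ξ)‖ * ‖ξ‖ :=
          ContinuousLinearMap.le_opNorm _ _
      _ ≤ (δ * ‖t • ξ‖) * ‖ξ‖ := by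
          apply mul_le_mul_of_nonneg_right h1 (norm_nonneg ξ)
      _ ≤ δ * ‖ξ‖ ^ 2 := by
          rw [norm_smul, Real.norm_eq_abs, abs_of_nonneg ht.1]
          nlinarith [mul_nonneg (mul_nonneg hδ.le (sub_nonneg.2 ht.2)) (sq_nonneg ‖ξ‖), sq_nonneg ‖ξ‖]
  have hderivt : ∀ t ∈ Set.Icc (0:ℝ) 1,
      HasDerivWithinAt (fun t : ℝ => H₀ (t • ξ) - t ^ 2 / 2 * (A ξ ξ))
        (fderiv ℝ H₀ (t • ξ) ξ - t * (A ξ ξ)) (Set.Icc 0 1) t := by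
    intro t _
    have h1 : HasDerivAt (fun t : ℝ => t • ξ) ξ t := by
      simpa using (hasDerivAt_id t).smul_const ξ
    have h2 : HasDerivAt (fun t : ℝ => H₀ (t • ξ)) (fderiv ℝ H₀ (t • ξ) ξ) t :=
      (hdiff (t • ξ)).hasFDerivAt.comp_hasDerivAt t h1
    have h3 : HasDerivAt (fun t : ℝ => t ^ 2 / 2 * (A ξ ξ)) (t * (A ξ ξ)) t := by
      have := ((hasDerivAt_pow 2 t).div_const 2).mul_const (A ξ ξ)
      simpa using this.congr_deriv (by ring)
    exact (h2.sub h3).hasDerivWithinAt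
  have hmv := Convex.norm_image_sub_le_of_norm_hasDerivWithin_le hderivt hbound
    (convex_Icc 0 1) (Set.left_mem_Icc.2 zero_le_one) (Set.right_mem_Icc.2 zero_le_one)
  simp only [one_smul, zero_smul, hH₀0] at hmv
  rw [Real.norm_eq_abs] at hmv
  have := abs_le.1 hmv
  have h10 := this.1
  norm_num at h10 ⊢
  linarith

set_option maxHeartbeats 2000000 in
/-- Positivity of the energy on the center manifold: writing
`H(ξ_c, u) = H₀(ξ_c) + H₁(ξ_c)·u + H₂(ξ_c)(u,u) + H₃(ξ_c,u)` with
`H₀(0) = 0`, `DH₀(0) = 0`, `D²H₀(0) ≥ c₀`, `|H₁(ξ)| ≤ (c₁ + C'|ξ|)|ξ|`,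
`H₂(ξ)(u,u) ≥ (c₂ - C'|ξ|)|u|²`, `H₃(ξ,0) = 0`, `D_uH₃(ξ,0) = 0`, `|D²H₃| ≤ C₀ε`
and `c₀c₂ - c₁² > 0`, there exist `r, c*, ε₀ > 0` with
`H ≥ c*(|ξ_c|² + |u|²)` for `|ξ_c| ≤ r`, `|u| ≤ b` and `ε ∈ [0, ε₀)`. -/
theorem energy_positivity_on_center_manifold
    {X Y : Type*} [NormedAddCommGroup X] [NormedSpace ℝ X]
    [NormedAddCommGroup Y] [NormedSpace ℝ Y]
    (c₀ c₁ c₂ C' C₀ b : ℝ) (hc₀ : 0 < c₀) (hc₁ : 0 ≤ c₁) (hc₂ : 0 < c₂)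
    (hC' : 0 ≤ C') (hC₀ : 0 ≤ C₀) (hb : 0 < b)
    (hdet : 0 < c₀ * c₂ - c₁ ^ 2)
    (H₀ : X → ℝ) (H₁ : X → (Y →L[ℝ] ℝ)) (H₂ : X → (Y →L[ℝ] Y →L[ℝ] ℝ))
    (H₃ : ℝ → X → Y → ℝ) (DuH₃ : ℝ → X → Y → (Y →L[ℝ] ℝ))
    (hH₀smooth : ContDiff ℝ 2 H₀) (hH₀0 : H₀ 0 = 0) (hDH₀0 : fderiv ℝ H₀ 0 = 0)
    (hD2H₀ : ∀ ξ : X, c₀ * ‖ξ‖ ^ 2 ≤ iteratedFDeriv ℝ 2 H₀ 0 ![ξ, ξ])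
    (hH₁ : ∀ ξ : X, ‖H₁ ξ‖ ≤ (c₁ + C' * ‖ξ‖) * ‖ξ‖)
    (hH₂ : ∀ (ξ : X) (u : Y), (c₂ - C' * ‖ξ‖) * ‖u‖ ^ 2 ≤ H₂ ξ u u)
    (hH₃0 : ∀ ε ξ, H₃ ε ξ 0 = 0)
    (hDuH₃ : ∀ ε ξ u, HasFDerivAt (H₃ ε ξ) (DuH₃ ε ξ u) u)
    (hDuH₃0 : ∀ ε ξ, DuH₃ ε ξ 0 = 0)
    (hD2H₃ : ∀ ε ≥ (0:ℝ), ∀ (ξ : X) (u u' : Y),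
      ‖DuH₃ ε ξ u - DuH₃ ε ξ u'‖ ≤ C₀ * ε * ‖u - u'‖) :
    ∃ r > (0:ℝ), ∃ cstar > (0:ℝ), ∃ ε₀ > (0:ℝ),
      ∀ ε ∈ Set.Ico (0:ℝ) ε₀, ∀ (ξ : X) (u : Y), ‖ξ‖ ≤ r → ‖u‖ ≤ b →
        cstar * (‖ξ‖ ^ 2 + ‖u‖ ^ 2) ≤ H₀ ξ + H₁ ξ u + H₂ ξ u u + H₃ ε ξ u := by
  set κ₀ : ℝ := (c₀ * c₂ / 2 - c₁ ^ 2 / 4) / (c₀ / 2 + c₂) with hκ₀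
  have hden : (0:ℝ) < c₀ / 2 + c₂ := by linarith
  have hnum : (0:ℝ) < c₀ * c₂ / 2 - c₁ ^ 2 / 4 := by nlinarith [sq_nonneg c₁]
  have hκ₀pos : 0 < κ₀ := div_pos hnum hden
  have hκ₀def : κ₀ * (c₀ / 2 + c₂) = c₀ * c₂ / 2 - c₁ ^ 2 / 4 :=
    div_mul_cancel₀ _ hden.ne'
  set κ : ℝ := κ₀ / 2 with hκ
  set a₀ : ℝ := c₀ / 2 - κ with ha₀def
  set c₂' : ℝ := c₂ - κ with hc₂'def
  have ha₀ : 0 < a₀ := by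
    have : κ₀ < c₀ := by
      rw [hκ₀, div_lt_iff₀ hden]; nlinarith [sq_nonneg c₁]
    rw [ha₀def, hκ]; linarith
  have hc₂'pos : 0 < c₂' := by
    have : κ₀ < 2 * c₂ := by
      rw [hκ₀, div_lt_iff₀ hden]; nlinarith [sq_nonneg c₁]
    rw [hc₂'def, hκ]; linarith
  set f0 : ℝ := 4 * a₀ * c₂' - c₁ ^ 2 with hf0def
  have hf0 : 0 < f0 := by
    rw [hf0def, ha₀def, hc₂'def, hκ]
    nlinarith [hκ₀def, sq_nonneg κ₀, sq_nonneg c₁]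
  set M : ℝ := 8 * a₀ + 4 * c₂' + 2 * c₁ + 1 with hMdef
  have hM : 0 < M := by positivity
  set e : ℝ := min (f0 / M) (min (a₀ / 2) (c₂' / 4)) with hedef
  have he : 0 < e := lt_min (div_pos hf0 hM) (lt_min (half_pos ha₀) (div_pos hc₂'pos (by norm_num)))
  have heM : e * M ≤ f0 := by
    have h1 : e ≤ f0 / M := min_le_left _ _
    calc e * M ≤ (f0 / M) * M := mul_le_mul_of_nonneg_right h1 hM.le
      _ = f0 := div_mul_cancel₀ _ hM.ne'
  have hea : e ≤ a₀ / 2 := le_trans (min_le_right _ _) (min_le_left _ _)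
  have hec : e ≤ c₂' / 4 := le_trans (min_le_right _ _) (min_le_right _ _)
  have hkey : (c₁ + e) ^ 2 ≤ 4 * (a₀ - e) * (c₂' - 2 * e) := by
    nlinarith [heM, sq_nonneg e, he.le]
  clear_value κ₀ κ a₀ c₂' f0 M e
  obtain ⟨r₁, hr₁, htay⟩ := taylor2 H₀ hH₀smooth hH₀0 hDH₀0 e he
  refine ⟨min r₁ (e / (C' + 1)), lt_min hr₁ (div_pos he (by linarith)),
    κ, by rw [hκ]; exact half_pos hκ₀pos,
    e / (C₀ + 1), div_pos he (by linarith), ?_⟩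
  rintro ε ⟨hε0, hε1⟩ ξ u hξ hu
  set s := ‖ξ‖ with hs
  set t := ‖u‖ with ht
  have hs0 : 0 ≤ s := norm_nonneg _
  have ht0 : 0 ≤ t := norm_nonneg _
  have hsr₁ : s ≤ r₁ := le_trans hξ (min_le_left _ _)
  have hC's : C' * s ≤ e := by
    have h1 : s ≤ e / (C' + 1) := le_trans hξ (min_le_right _ _)
    have h2 : C' * s ≤ C' * (e / (C' + 1)) := mul_le_mul_of_nonneg_left h1 hC'
    have h3 : C' * (e / (C' + 1)) ≤ e := by
      rw [mul_comm, div_mul_eq_mul_div, div_le_iff₀ (by linarith : (0:ℝ) < C' + 1)]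
      nlinarith [he.le]
    linarith
  have hC₀ε : C₀ * ε ≤ e := by
    have h2 : C₀ * ε ≤ C₀ * (e / (C₀ + 1)) := mul_le_mul_of_nonneg_left hε1.le hC₀
    have h3 : C₀ * (e / (C₀ + 1)) ≤ e := by
      rw [mul_comm, div_mul_eq_mul_div, div_le_iff₀ (by linarith : (0:ℝ) < C₀ + 1)]
      nlinarith [he.le]
    linarith
  -- bound on H₀
  have hB0 : (c₀ / 2 - e) * s ^ 2 ≤ H₀ ξ := by
    have h1 := htay ξ hsr₁
    have h2 := hD2H₀ ξ
    rw [iteratedFDeriv_two_apply] at h2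
    simp only [Matrix.cons_val_zero, Matrix.cons_val_one, Matrix.head_cons] at h2
    linarith [h1, h2]
  -- bound on H₁ term
  have hB1 : -((c₁ + e) * s * t) ≤ H₁ ξ u := by
    have h1 : ‖H₁ ξ u‖ ≤ ‖H₁ ξ‖ * ‖u‖ := (H₁ ξ).le_opNorm u
    have h2 : ‖H₁ ξ‖ * ‖u‖ ≤ ((c₁ + C' * s) * s) * t :=
      mul_le_mul_of_nonneg_right (hH₁ ξ) ht0
    have h3 : ((c₁ + C' * s) * s) * t ≤ (c₁ + e) * s * t := by
      nlinarith [mul_nonneg (mul_nonneg (sub_nonneg.2 hC's) hs0) ht0]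
    have h4 : |H₁ ξ u| ≤ (c₁ + e) * s * t := by
      rw [← Real.norm_eq_abs]; linarith
    linarith [abs_le.1 h4]
  -- bound on H₂ term
  have hB2 : (c₂ - e) * t ^ 2 ≤ H₂ ξ u u := by
    have h1 := hH₂ ξ u
    nlinarith [mul_nonneg (sub_nonneg.2 hC's) (sq_nonneg t)]
  -- bound on H₃ term
  have hB3 : -(e * t ^ 2) ≤ H₃ ε ξ u := by
    have hbnd : ∀ v ∈ Metric.closedBall (0:Y) ‖u‖, ‖DuH₃ ε ξ v‖ ≤ C₀ * ε * t := by
      intro v hv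
      have h1 := hD2H₃ ε hε0 ξ v 0
      rw [hDuH₃0, sub_zero, sub_zero] at h1
      have h2 : ‖v‖ ≤ t := by
        rwa [Metric.mem_closedBall, dist_zero_right] at hv
      calc ‖DuH₃ ε ξ v‖ ≤ C₀ * ε * ‖v‖ := h1
        _ ≤ C₀ * ε * t := mul_le_mul_of_nonneg_left h2 (by positivity)
    have hmv := Convex.norm_image_sub_le_of_norm_hasFDerivWithin_le
      (fun v _ => (hDuH₃ ε ξ v).hasFDerivWithinAt) hbnd
      (convex_closedBall (0:Y) ‖u‖) (Metric.mem_closedBall_self (norm_nonneg u))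
      (mem_closedBall_zero_iff.2 le_rfl)
    rw [hH₃0, sub_zero, sub_zero] at hmv
    have h5 : |H₃ ε ξ u| ≤ e * t ^ 2 := by
      rw [← Real.norm_eq_abs]
      calc ‖H₃ ε ξ u‖ ≤ C₀ * ε * t * ‖u‖ := hmv
        _ = (C₀ * ε) * t ^ 2 := by rw [← ht]; ring
        _ ≤ e * t ^ 2 := mul_le_mul_of_nonneg_right hC₀ε (sq_nonneg t)
    linarith [abs_le.1 h5]
  -- quadratic form bound
  have hq : κ * (s ^ 2 + t ^ 2) ≤
      (c₀ / 2 - e) * s ^ 2 - (c₁ + e) * s * t + (c₂ - 2 * e) * t ^ 2 := by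
    apply quad_lower _ _ _ _ _ _ hs0 ht0 (by linarith)
    · rw [ha₀def] at hea; linarith
    · rw [hc₂'def] at hec; linarith
    · have h1 : (4:ℝ) * (a₀ - e) * (c₂' - 2 * e) ≤
          4 * ((c₀ / 2 - e) - κ) * ((c₂ - 2 * e) - κ) :=
        le_of_eq (by rw [ha₀def, hc₂'def]; ring)
      calc (c₁ + e) ^ 2 ≤ 4 * (a₀ - e) * (c₂' - 2 * e) := hkey
        _ ≤ _ := h1
  linarith [hq, hB0, hB1, hB2, hB3]
end

section
/- (Cancellation of oscillatory forcing against a decaying amplitude.) Let J be an invertible antisymmetric m×m matrix with |J^{-1}| ≤ C₀, let w : ℝ_{≤0} → ℝ^{1×m} be C¹ with |w(t)| + |w'(t)| ≤ M e^{αt} for some α > 0 (t ≤ 0), and let y₀ ∈ ℝ^m. Then for every ε > 0, |∫_{-∞}^{0} w(t) e^{(t/ε)J} y₀ dt| ≤ ε C₀ M (1 + 1/α) |y₀|. -/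
open scoped RealInnerProductSpace
open MeasureTheory Set Filter
open scoped Topology

section Aux

lemma aux_intervalIntegrable_exp_mul (α y z : ℝ) :
    IntervalIntegrable (fun t => Real.exp (α * t)) volume y z :=
  (Real.continuous_exp.comp (continuous_const.mul continuous_id)).intervalIntegrable y z

lemma aux_intervalIntegral_exp_mul {α : ℝ} (hα : 0 < α) (y : ℝ) :
    (∫ x in y..(0:ℝ), Real.exp (α * x)) = 1/α - Real.exp (α * y) / α := by
  have h : ∀ x ∈ Set.uIcc y (0:ℝ), HasDerivAt (fun s => Real.exp (α * s) / α)
      (Real.exp (α * x)) x := by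
    intro x _
    have h1 : HasDerivAt (fun s : ℝ => α * s) α x := by
      simpa using (hasDerivAt_id x).const_mul α
    have := (Real.hasDerivAt_exp (α * x)).comp x h1
    have h2 := this.div_const α
    simpa [mul_div_assoc, mul_comm, mul_div_cancel_left₀ _ hα.ne'] using h2
  rw [intervalIntegral.integral_eq_sub_of_hasDerivAt h (aux_intervalIntegrable_exp_mul α y 0)]
  simp [Real.exp_zero]

lemma aux_integrableOn_exp_mul {α : ℝ} (hα : 0 < α) :
    IntegrableOn (fun t => Real.exp (α * t)) (Set.Iic (0:ℝ)) := by
  refine integrableOn_Iic_of_intervalIntegral_norm_bounded (1/α) 0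
    (fun y => ((Real.continuous_exp.comp (continuous_const.mul continuous_id)).integrableOn_Ioc))
    (tendsto_id (α := ℝ)) (Eventually.of_forall fun y => ?_)
  have : (∫ x in y..(0:ℝ), ‖Real.exp (α * x)‖) = ∫ x in y..(0:ℝ), Real.exp (α * x) := by
    simp [Real.norm_eq_abs, abs_of_pos (Real.exp_pos _)]
  simp only [id_eq]
  rw [this, aux_intervalIntegral_exp_mul hα]
  have := (Real.exp_pos (α * y)).le
  have h2 : 0 ≤ Real.exp (α * y) / α := div_nonneg this hα.le
  linarith

lemma aux_integral_exp_mul {α : ℝ} (hα : 0 < α) :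
    (∫ t in Set.Iic (0:ℝ), Real.exp (α * t)) = 1/α := by
  refine tendsto_nhds_unique
    (intervalIntegral_tendsto_integral_Iic _ (aux_integrableOn_exp_mul hα) tendsto_id) ?_
  have : Tendsto (fun y : ℝ => 1/α - Real.exp (α * y) / α) atBot (𝓝 (1/α - 0)) := by
    refine Tendsto.const_sub _ ?_
    have h1 : Tendsto (fun y : ℝ => α * y) atBot atBot :=
      Tendsto.const_mul_atBot hα tendsto_id
    have := (Real.tendsto_exp_atBot.comp h1).div_const α
    simpa using this
  rw [sub_zero] at this
  exact this.congr (fun y => (aux_intervalIntegral_exp_mul hα y).symm)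

variable {m : ℕ}

local notation "E" => EuclideanSpace ℝ (Fin m)

/-- The exponential of an antisymmetric operator is an isometry. -/
lemma aux_norm_exp_apply (A : E →L[ℝ] E)
    (hA : ∀ u v : E, ⟪A u, v⟫ = -⟪u, A v⟫) (y : E) (s : ℝ) :
    ‖NormedSpace.exp (s • A) y‖ = ‖y‖ := by
  set u : ℝ → E := fun s => NormedSpace.exp (s • A) y with hu_def
  have hu : ∀ s : ℝ, HasDerivAt u (A (u s)) s := by
    intro s
    have h1 := hasDerivAt_exp_smul_const' (𝕂 := ℝ) A s
    have h2 := h1.clm_apply (hasDerivAt_const s y)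
    simpa [ContinuousLinearMap.mul_apply] using h2
  have hg : ∀ s : ℝ, HasDerivAt (fun s => ⟪u s, u s⟫) 0 s := by
    intro s
    have hd := (hu s).inner ℝ (hu s)
    have h0 : ⟪u s, A (u s)⟫ + ⟪A (u s), u s⟫ = 0 := by
      have ha := hA (u s) (u s)
      have hb := real_inner_comm (u s) (A (u s))
      linarith
    rwa [h0] at hd
  have hconst := is_const_of_deriv_eq_zero (f := fun s => ⟪u s, u s⟫)
    (fun s => (hg s).differentiableAt) (fun s => (hg s).deriv) s 0
  have hu0 : u 0 = y := by
    show NormedSpace.exp ((0:ℝ) • A) y = y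
    rw [show (0:ℝ) • A = 0 from zero_smul ℝ A, NormedSpace.exp_zero,
      ContinuousLinearMap.one_apply]
  have hnorm : ‖u s‖ * ‖u s‖ = ‖y‖ * ‖y‖ := by
    have h1 := real_inner_self_eq_norm_mul_norm (u s)
    have h2 := real_inner_self_eq_norm_mul_norm (u 0)
    rw [hu0] at h2
    rw [← h1, ← h2, hconst, hu0]
  have := norm_nonneg (u s)
  have := norm_nonneg y
  nlinarith

end Aux

/-- Cancellation of oscillatory forcing against a decaying amplitude: if `J` is an
invertible antisymmetric matrix with `|J⁻¹| ≤ C₀` and `w : ℝ₋ → (ℝ^m)*` is `C¹`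
with `|w(t)| + |w'(t)| ≤ M e^{αt}` for `t ≤ 0`, then for every `ε > 0`,
`|∫_{-∞}^0 w(t) e^{(t/ε)J} y₀ dt| ≤ ε C₀ M (1 + 1/α) |y₀|`. -/
theorem oscillation_against_decaying_amplitude
    (m : ℕ) (C₀ M α : ℝ) (hα : 0 < α) (hM : 0 ≤ M)
    (J : EuclideanSpace ℝ (Fin m) ≃L[ℝ] EuclideanSpace ℝ (Fin m))
    (hJ : ∀ u v : EuclideanSpace ℝ (Fin m), ⟪J u, v⟫ = -⟪u, J v⟫)
    (hJinv : ‖(J.symm : EuclideanSpace ℝ (Fin m) →L[ℝ] EuclideanSpace ℝ (Fin m))‖ ≤ C₀)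
    (w w' : ℝ → (EuclideanSpace ℝ (Fin m) →L[ℝ] ℝ))
    (hw : ∀ t ≤ (0:ℝ), HasDerivAt w (w' t) t)
    (hwbd : ∀ t ≤ (0:ℝ), ‖w t‖ + ‖w' t‖ ≤ M * Real.exp (α * t))
    (y₀ : EuclideanSpace ℝ (Fin m)) (ε : ℝ) (hε : 0 < ε) :
    |∫ t in Set.Iic (0:ℝ),
        w t (NormedSpace.exp ((t / ε) •
          (J : EuclideanSpace ℝ (Fin m) →L[ℝ] EuclideanSpace ℝ (Fin m))) y₀)|
      ≤ ε * C₀ * M * (1 + 1 / α) * ‖y₀‖ := by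
  set Jc : EuclideanSpace ℝ (Fin m) →L[ℝ] EuclideanSpace ℝ (Fin m) := (J : EuclideanSpace ℝ (Fin m) →L[ℝ] EuclideanSpace ℝ (Fin m)) with hJc
  set Ji : EuclideanSpace ℝ (Fin m) →L[ℝ] EuclideanSpace ℝ (Fin m) := (J.symm : EuclideanSpace ℝ (Fin m) →L[ℝ] EuclideanSpace ℝ (Fin m)) with hJi
  set u : ℝ → EuclideanSpace ℝ (Fin m) := fun t => NormedSpace.exp ((t / ε) • Jc) y₀ with hu_def
  have hC₀ : 0 ≤ C₀ := le_trans (norm_nonneg _) hJinv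
  -- norm of u is constant
  have hunorm : ∀ t, ‖u t‖ = ‖y₀‖ := fun t => aux_norm_exp_apply Jc hJ y₀ (t / ε)
  -- derivative of u
  have hu : ∀ t, HasDerivAt u (ε⁻¹ • Jc (u t)) t := by
    intro t
    have h1 := hasDerivAt_exp_smul_const' (𝕂 := ℝ) Jc (t / ε)
    have h2 : HasDerivAt (fun t : ℝ => t / ε) ε⁻¹ t := by
      simpa [div_eq_mul_inv] using (hasDerivAt_id t).div_const ε
    have h3 := (h1.scomp t h2)
    have h4 := h3.clm_apply (hasDerivAt_const t y₀)
    simpa [hu_def, ContinuousLinearMap.mul_apply, Function.comp] using h4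
  -- continuity of u
  have hucont : Continuous u := continuous_iff_continuousAt.2 fun t => (hu t).continuousAt
  -- the function after integration by parts
  set v : ℝ → EuclideanSpace ℝ (Fin m) := fun t => ε • Ji (u t) with hv_def
  have hvcont : Continuous v := ((continuous_const (y := ε)).smul (Ji.continuous.comp hucont))
  have hv : ∀ t, HasDerivAt v (u t) t := by
    intro t
    have h1 := (hasDerivAt_const t ((ε • Ji : EuclideanSpace ℝ (Fin m) →L[ℝ] EuclideanSpace ℝ (Fin m)))).clm_apply (hu t)
    have h2 : (ε • Ji : EuclideanSpace ℝ (Fin m) →L[ℝ] EuclideanSpace ℝ (Fin m)) (ε⁻¹ • Jc (u t)) = u t := by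
      have h3 : Ji (Jc (u t)) = u t := J.symm_apply_apply (u t)
      rw [ContinuousLinearMap.smul_apply, Ji.map_smul, h3, smul_smul,
        mul_inv_cancel₀ hε.ne', one_smul]
    simpa [h2] using h1
  have hvbd : ∀ t, ‖v t‖ ≤ ε * C₀ * ‖y₀‖ := by
    intro t
    calc ‖v t‖ = ε * ‖Ji (u t)‖ := by
          rw [hv_def]; simp [norm_smul, abs_of_pos hε]
      _ ≤ ε * (C₀ * ‖y₀‖) := by
          refine mul_le_mul_of_nonneg_left ?_ hε.le
          calc ‖Ji (u t)‖ ≤ ‖Ji‖ * ‖u t‖ := Ji.le_opNorm _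
            _ ≤ C₀ * ‖y₀‖ := by
                rw [hunorm]
                exact mul_le_mul_of_nonneg_right hJinv (norm_nonneg _)
      _ = ε * C₀ * ‖y₀‖ := by ring
  set F : ℝ → ℝ := fun t => w t (v t) with hF_def
  set f₁ : ℝ → ℝ := fun t => w t (u t) with hf₁_def
  set f₂ : ℝ → ℝ := fun t => w' t (v t) with hf₂_def
  have hF : ∀ t ≤ (0:ℝ), HasDerivAt F (f₂ t + f₁ t) t := by
    intro t ht
    exact (hw t ht).clm_apply (hv t)
  -- bounds
  have hf₁bd : ∀ t ≤ (0:ℝ), ‖f₁ t‖ ≤ M * Real.exp (α * t) * ‖y₀‖ := by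
    intro t ht
    calc ‖f₁ t‖ ≤ ‖w t‖ * ‖u t‖ := (w t).le_opNorm _
      _ ≤ (M * Real.exp (α * t)) * ‖y₀‖ := by
          rw [hunorm]
          refine mul_le_mul_of_nonneg_right ?_ (norm_nonneg _)
          have := hwbd t ht
          have := norm_nonneg (w' t)
          linarith
  have hf₂bd : ∀ t ≤ (0:ℝ), ‖f₂ t‖ ≤ M * Real.exp (α * t) * (ε * C₀ * ‖y₀‖) := by
    intro t ht
    calc ‖f₂ t‖ ≤ ‖w' t‖ * ‖v t‖ := (w' t).le_opNorm _
      _ ≤ (M * Real.exp (α * t)) * (ε * C₀ * ‖y₀‖) := by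
          refine mul_le_mul ?_ (hvbd t) (norm_nonneg _) ?_
          · have := hwbd t ht
            have := norm_nonneg (w t)
            linarith
          · positivity
  -- continuity of w on Iic 0
  have hwcont : ContinuousOn w (Set.Iic (0:ℝ)) :=
    fun t ht => (hw t ht).continuousAt.continuousWithinAt
  -- measurability
  have hf₁m : AEStronglyMeasurable f₁ (volume.restrict (Set.Iic (0:ℝ))) := by
    have : ContinuousOn f₁ (Set.Iic (0:ℝ)) := by
      exact isBoundedBilinearMap_apply.continuous.comp_continuousOn
        (hwcont.prodMk hucont.continuousOn)
    exact this.aestronglyMeasurable measurableSet_Iic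
  have hae_lt : ∀ᵐ t ∂(volume.restrict (Set.Iic (0:ℝ))), t < 0 := by
    have h0 : (volume.restrict (Set.Iic (0:ℝ))) {(0:ℝ)} = 0 :=
      le_antisymm (le_trans (Measure.restrict_le_self _) (by simp)) zero_le
    have h1 : ∀ᵐ t ∂(volume.restrict (Set.Iic (0:ℝ))), t ≠ 0 := by
      rw [ae_iff]
      simp only [ne_eq, not_not]
      simpa using h0
    filter_upwards [h1, ae_restrict_mem measurableSet_Iic] with t ht ht2
    exact lt_of_le_of_ne ht2 ht
  have hf₂m : AEStronglyMeasurable f₂ (volume.restrict (Set.Iic (0:ℝ))) := by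
    have hder : StronglyMeasurable (deriv w) := stronglyMeasurable_deriv w
    have hg : AEStronglyMeasurable (fun t => (deriv w t) (v t))
        (volume.restrict (Set.Iic (0:ℝ))) := by
      exact isBoundedBilinearMap_apply.continuous.comp_aestronglyMeasurable
        (hder.aestronglyMeasurable.prodMk hvcont.aestronglyMeasurable)
    refine hg.congr ?_
    filter_upwards [hae_lt] with t ht
    rw [(hw t ht.le).deriv]
  -- integrability
  have hexp_int : IntegrableOn (fun t => Real.exp (α * t)) (Set.Iic (0:ℝ)) :=
    aux_integrableOn_exp_mul hα
  have hg₁int : IntegrableOn (fun t => M * Real.exp (α * t) * ‖y₀‖) (Set.Iic (0:ℝ)) :=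
    (hexp_int.const_mul M).mul_const _
  have hg₂int : IntegrableOn (fun t => M * Real.exp (α * t) * (ε * C₀ * ‖y₀‖))
      (Set.Iic (0:ℝ)) := (hexp_int.const_mul M).mul_const _
  have hf₁int : IntegrableOn f₁ (Set.Iic (0:ℝ)) := by
    refine hg₁int.mono' hf₁m ?_
    filter_upwards [ae_restrict_mem measurableSet_Iic] with t ht
    exact hf₁bd t ht
  have hf₂int : IntegrableOn f₂ (Set.Iic (0:ℝ)) := by
    refine hg₂int.mono' hf₂m ?_
    filter_upwards [ae_restrict_mem measurableSet_Iic] with t ht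
    exact hf₂bd t ht
  have hFint : IntegrableOn (fun t => f₂ t + f₁ t) (Set.Iic (0:ℝ)) := hf₂int.add hf₁int
  -- limit of F at -infinity
  have hFtend : Tendsto F atBot (𝓝 0) := by
    refine squeeze_zero_norm' (a := fun t : ℝ => (M * Real.exp (α * t)) * (ε * C₀ * ‖y₀‖)) ?_ ?_
    · filter_upwards [Iic_mem_atBot (0:ℝ)] with t ht
      calc ‖F t‖ ≤ ‖w t‖ * ‖v t‖ := (w t).le_opNorm _
        _ ≤ (M * Real.exp (α * t)) * (ε * C₀ * ‖y₀‖) := by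
            refine mul_le_mul ?_ (hvbd t) (norm_nonneg _) ?_
            · have := hwbd t ht
              have := norm_nonneg (w' t)
              linarith
            · positivity
    · have h1 : Tendsto (fun t : ℝ => α * t) atBot atBot :=
        Tendsto.const_mul_atBot hα tendsto_id
      have h2 := Real.tendsto_exp_atBot.comp h1
      have h3 := (h2.const_mul M).mul_const (ε * C₀ * ‖y₀‖)
      simpa using h3
  -- integration by parts
  have hparts : (∫ t in Set.Iic (0:ℝ), (f₂ t + f₁ t)) = F 0 - 0 :=
    integral_Iic_of_hasDerivAt_of_tendsto' (fun x hx => hF x hx) hFint hFtend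
  rw [sub_zero] at hparts
  have hsplit : (∫ t in Set.Iic (0:ℝ), (f₂ t + f₁ t))
      = (∫ t in Set.Iic (0:ℝ), f₂ t) + ∫ t in Set.Iic (0:ℝ), f₁ t :=
    integral_add hf₂int hf₁int
  have hkey : (∫ t in Set.Iic (0:ℝ), f₁ t) = F 0 - ∫ t in Set.Iic (0:ℝ), f₂ t := by
    rw [← hparts, hsplit]; ring
  -- final estimates
  have hF0 : |F 0| ≤ ε * C₀ * M * ‖y₀‖ := by
    have h1 : ‖F 0‖ ≤ ‖w 0‖ * ‖v 0‖ := (w 0).le_opNorm _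
    have h2 : ‖w 0‖ ≤ M := by
      have h := hwbd 0 le_rfl
      rw [mul_zero, Real.exp_zero, mul_one] at h
      linarith [norm_nonneg (w' 0)]
    have h3 := hvbd 0
    calc |F 0| ≤ ‖w 0‖ * ‖v 0‖ := h1
      _ ≤ M * (ε * C₀ * ‖y₀‖) := by
          refine mul_le_mul h2 h3 (norm_nonneg _) hM
      _ = ε * C₀ * M * ‖y₀‖ := by ring
  have hI₂ : |∫ t in Set.Iic (0:ℝ), f₂ t| ≤ ε * C₀ * M * ‖y₀‖ * (1/α) := by
    calc |∫ t in Set.Iic (0:ℝ), f₂ t| ≤ ∫ t in Set.Iic (0:ℝ), ‖f₂ t‖ := by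
          rw [← Real.norm_eq_abs]
          exact norm_integral_le_integral_norm _
      _ ≤ ∫ t in Set.Iic (0:ℝ), M * Real.exp (α * t) * (ε * C₀ * ‖y₀‖) := by
          refine integral_mono_ae hf₂int.norm hg₂int ?_
          filter_upwards [ae_restrict_mem measurableSet_Iic] with t ht
          exact hf₂bd t ht
      _ = (M * (ε * C₀ * ‖y₀‖)) * ∫ t in Set.Iic (0:ℝ), Real.exp (α * t) := by
          rw [← integral_const_mul]
          exact integral_congr_ae (Eventually.of_forall fun t => by ring)
      _ = ε * C₀ * M * ‖y₀‖ * (1/α) := by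
          rw [aux_integral_exp_mul hα]; ring
  calc |∫ t in Set.Iic (0:ℝ), f₁ t| = |F 0 - ∫ t in Set.Iic (0:ℝ), f₂ t| := by rw [hkey]
    _ ≤ |F 0| + |∫ t in Set.Iic (0:ℝ), f₂ t| := abs_sub _ _
    _ ≤ ε * C₀ * M * ‖y₀‖ + ε * C₀ * M * ‖y₀‖ * (1/α) := add_le_add hF0 hI₂
    _ = ε * C₀ * M * (1 + 1/α) * ‖y₀‖ := by ring
end
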